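/- arXiv:2306.08282 — 5 statements merged into one kernel-verified Lean document; each statement's English description precedes it below -/
import Mathlib

section
/- For every a > 1, every k ∈ ℕ and every u ≥ a, the k-th iterate of F satisfies F^k(u) = a + ∫_a^u dt/(F^{k−1}(t)·F^{k−2}(t)···F^1(t)·F^0(t)); equivalently, for u > a, F^k is differentiable at u with (F^k)'(u) = 1/(F^{k−1}(u)···F^1(u)·F^0(u)). -/
open Real MeasureTheory Filter Topology Set

/-- `F(u) = a - log a + log u`. -/
noncomputable def Fa (a : ℝ) : ℝ → ℝ := fun u => a - Real.log a + Real.log u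

lemma Fa_ge (a : ℝ) (ha : 1 < a) {u : ℝ} (hu : a ≤ u) : a ≤ Fa a u := by
  have h0 : 0 < a := lt_trans one_pos ha
  have : Real.log a ≤ Real.log u := Real.log_le_log h0 hu
  unfold Fa; linarith

lemma Fa_iter_ge (a : ℝ) (ha : 1 < a) (k : ℕ) {u : ℝ} (hu : a ≤ u) :
    a ≤ (Fa a)^[k] u := by
  induction k with
  | zero => simpa
  | succ n ih => rw [Function.iterate_succ_apply']; exact Fa_ge a ha ih

lemma Fa_iter_pos (a : ℝ) (ha : 1 < a) (k : ℕ) {u : ℝ} (hu : a ≤ u) :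
    0 < (Fa a)^[k] u :=
  lt_of_lt_of_le (lt_trans one_pos ha) (Fa_iter_ge a ha k hu)

lemma Fa_prod_pos (a : ℝ) (ha : 1 < a) (k : ℕ) {u : ℝ} (hu : a ≤ u) :
    0 < ∏ j ∈ Finset.range k, (Fa a)^[j] u :=
  Finset.prod_pos fun j _ => Fa_iter_pos a ha j hu

lemma Fa_iter_hasDerivAt (a : ℝ) (ha : 1 < a) (k : ℕ) {u : ℝ} (hu : a ≤ u) :
    HasDerivAt ((Fa a)^[k]) (1 / ∏ j ∈ Finset.range k, (Fa a)^[j] u) u := by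
  induction k with
  | zero => simpa using hasDerivAt_id u
  | succ n ih =>
    have hv : 0 < (Fa a)^[n] u := Fa_iter_pos a ha n hu
    have hF : HasDerivAt (Fa a) (((Fa a)^[n] u)⁻¹) ((Fa a)^[n] u) := by
      exact (Real.hasDerivAt_log hv.ne').const_add (a - Real.log a)
    have h := hF.comp u ih
    rw [show (Fa a)^[n+1] = Fa a ∘ (Fa a)^[n] from Function.iterate_succ' _ _]
    refine h.congr_deriv ?_
    rw [Finset.prod_range_succ]
    have hp : (∏ j ∈ Finset.range n, (Fa a)^[j] u) ≠ 0 :=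
      (Fa_prod_pos a ha n hu).ne'
    field_simp

lemma Fa_fixed (a : ℝ) (k : ℕ) : (Fa a)^[k] a = a :=
  Function.iterate_fixed (by simp [Fa]) k

/-- For every `a > 1`, `k ∈ ℕ` and `u ≥ a`, the iterate satisfies
`F^k(u) = a + ∫_a^u dt / (F^{k-1}(t) ⋯ F^0(t))`; equivalently, for `u > a`, `F^k` is
differentiable at `u` with derivative `1 / (F^{k-1}(u) ⋯ F^0(u))`. -/
theorem stmt1 (a : ℝ) (ha : 1 < a) (k : ℕ) :
    (∀ u : ℝ, a ≤ u →
      (Fa a)^[k] u = a + ∫ t in a..u, 1 / ∏ j ∈ Finset.range k, (Fa a)^[j] t) ∧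
    (∀ u : ℝ, a < u →
      HasDerivAt ((Fa a)^[k]) (1 / ∏ j ∈ Finset.range k, (Fa a)^[j] u) u) := by
  constructor
  · intro u hu
    have hIcc : Set.uIcc a u = Set.Icc a u := Set.uIcc_of_le hu
    have key : ∀ t ∈ Set.uIcc a u,
        HasDerivAt ((Fa a)^[k]) (1 / ∏ j ∈ Finset.range k, (Fa a)^[j] t) t := by
      intro t ht
      rw [hIcc] at ht
      exact Fa_iter_hasDerivAt a ha k ht.1
    have hcont : ContinuousOn (fun t => 1 / ∏ j ∈ Finset.range k, (Fa a)^[j] t)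
        (Set.uIcc a u) := by
      apply ContinuousOn.div continuousOn_const
      · apply continuousOn_finset_prod
        intro j _
        intro t ht
        rw [hIcc] at ht
        exact (Fa_iter_hasDerivAt a ha j ht.1).continuousAt.continuousWithinAt
      · intro t ht
        rw [hIcc] at ht
        exact (Fa_prod_pos a ha k ht.1).ne'
    have hint := intervalIntegral.integral_eq_sub_of_hasDerivAt key
      (hcont.intervalIntegrable)
    have hfix := Fa_fixed a k
    rw [hint, hfix]
    ring
  · intro u hu
    exact Fa_iter_hasDerivAt a ha k hu.le
end

section
/- For each n ∈ ℕ, lim_{u→∞} φ(u)/F^n(u) = 0. -/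
open Real MeasureTheory Filter Topology Set

/-- `F̃(u) = a · ∏_{k=0}^∞ (F^k(u)/a)`. -/
noncomputable def Ftilde (a : ℝ) (u : ℝ) : ℝ := a * ∏' k : ℕ, ((Fa a)^[k] u / a)

/-- `φ(u) = a + ∫_a^u dt / F̃(t)`. -/
noncomputable def phiFun (a : ℝ) (u : ℝ) : ℝ := a + ∫ t in a..u, 1 / Ftilde a t

namespace Stmt4Aux

variable {a : ℝ}

lemma Fa_fixed (ha : 1 < a) : Fa a a = a := by
  simp [Fa]

lemma le_iter (ha : 1 < a) {t : ℝ} (ht : a ≤ t) (k : ℕ) : a ≤ (Fa a)^[k] t := by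
  induction k with
  | zero => simpa
  | succ k ih =>
    rw [Function.iterate_succ_apply']
    have hla : Real.log a ≤ Real.log ((Fa a)^[k] t) :=
      Real.log_le_log (by linarith) ih
    simp only [Fa]
    linarith

lemma iter_pos (ha : 1 < a) {t : ℝ} (ht : a ≤ t) (k : ℕ) : 0 < (Fa a)^[k] t :=
  lt_of_lt_of_le (by linarith) (le_iter ha ht k)

lemma iter_sub_le (ha : 1 < a) {t : ℝ} (ht : a ≤ t) (k : ℕ) :
    (Fa a)^[k] t - a ≤ (t - a) / a ^ k := by
  induction k with
  | zero => simp
  | succ k ih =>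
    rw [Function.iterate_succ_apply']
    have hs : a ≤ (Fa a)^[k] t := le_iter ha ht k
    have hlog : Real.log ((Fa a)^[k] t) - Real.log a ≤ ((Fa a)^[k] t - a) / a := by
      rw [← Real.log_div (by linarith) (by linarith)]
      have h1 : Real.log ((Fa a)^[k] t / a) ≤ (Fa a)^[k] t / a - 1 :=
        Real.log_le_sub_one_of_pos (div_pos (by linarith) (by linarith))
      have : (Fa a)^[k] t / a - 1 = ((Fa a)^[k] t - a) / a := by
        field_simp
      linarith
    have hdiv : ((Fa a)^[k] t - a) / a ≤ ((t - a) / a ^ k) / a :=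
      div_le_div_of_nonneg_right ih (by linarith) |>.trans_eq rfl
    simp only [Fa]
    have : ((t - a) / a ^ k) / a = (t - a) / a ^ (k + 1) := by
      rw [div_div, pow_succ]
    linarith

lemma one_le_term (ha : 1 < a) {t : ℝ} (ht : a ≤ t) (k : ℕ) : 1 ≤ (Fa a)^[k] t / a :=
  (one_le_div (by linarith)).2 (le_iter ha ht k)

lemma summable_log_term (ha : 1 < a) {t : ℝ} (ht : a ≤ t) :
    Summable fun k : ℕ => Real.log ((Fa a)^[k] t / a) := by
  have hgeo : Summable fun k : ℕ => ((t - a) / a) * (1 / a) ^ k :=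
    (summable_geometric_of_lt_one (by positivity) (by
      rw [div_lt_one (by linarith)]; linarith)).mul_left _
  refine Summable.of_nonneg_of_le (fun k => Real.log_nonneg (one_le_term ha ht k))
    (fun k => ?_) hgeo
  have hs : a ≤ (Fa a)^[k] t := le_iter ha ht k
  have h1 : Real.log ((Fa a)^[k] t / a) ≤ (Fa a)^[k] t / a - 1 :=
    Real.log_le_sub_one_of_pos (div_pos (by linarith) (by linarith))
  have h2 : (Fa a)^[k] t / a - 1 = ((Fa a)^[k] t - a) / a := by field_simp
  have h3 : ((Fa a)^[k] t - a) / a ≤ ((t - a) / a ^ k) / a :=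
    div_le_div_of_nonneg_right (iter_sub_le ha ht k) (by linarith)
  have ha0 : a ≠ 0 := by linarith
  have h4 : ((t - a) / a ^ k) / a = ((t - a) / a) * (1 / a) ^ k := by
    rw [div_div, ← pow_succ, one_div, inv_pow, ← div_eq_mul_inv, div_div, ← pow_succ']
  linarith

lemma multipliable_term (ha : 1 < a) {t : ℝ} (ht : a ≤ t) :
    Multipliable fun k : ℕ => (Fa a)^[k] t / a := by
  have := Real.multipliable_of_summable_log
    (fun k => lt_of_lt_of_le one_pos (one_le_term ha ht k)) (summable_log_term ha ht)
  exact this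

lemma prod_le_Ftilde (ha : 1 < a) {t : ℝ} (ht : a ≤ t) (n : ℕ) :
    (∏ k ∈ Finset.range (n + 1), (Fa a)^[k] t) / a ^ n ≤ Ftilde a t := by
  have hle : ∏ k ∈ Finset.range (n + 1), ((Fa a)^[k] t / a) ≤
      ∏' k : ℕ, ((Fa a)^[k] t / a) := by
    have hm : Multipliable fun k : ℕ => (Fa a)^[k] t / a := multipliable_term ha ht
    refine ge_of_tendsto hm.hasProd.tendsto_prod_nat ?_
    filter_upwards [eventually_ge_atTop (n + 1)] with m hm'
    have hmono : Monotone fun m : ℕ => ∏ k ∈ Finset.range m, ((Fa a)^[k] t / a) := by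
      apply monotone_nat_of_le_succ
      intro m
      rw [Finset.prod_range_succ]
      exact le_mul_of_one_le_right
        (Finset.prod_nonneg fun k _ => le_trans zero_le_one (one_le_term ha ht k))
        (one_le_term ha ht m)
    exact hmono hm'
  have hprod : ∏ k ∈ Finset.range (n + 1), ((Fa a)^[k] t / a) =
      (∏ k ∈ Finset.range (n + 1), (Fa a)^[k] t) / a ^ (n + 1) := by
    rw [Finset.prod_div_distrib, Finset.prod_const, Finset.card_range]
  have hmul := mul_le_mul_of_nonneg_left hle (le_of_lt (by linarith : (0:ℝ) < a))
  rw [hprod] at hmul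
  have ha0 : a ≠ 0 := by linarith
  have key : a * ((∏ k ∈ Finset.range (n + 1), (Fa a)^[k] t) / a ^ (n + 1)) =
      (∏ k ∈ Finset.range (n + 1), (Fa a)^[k] t) / a ^ n := by
    rw [pow_succ]
    field_simp
  rw [← key]
  exact hmul

lemma le_Ftilde (ha : 1 < a) {t : ℝ} (ht : a ≤ t) : t ≤ Ftilde a t := by
  have := prod_le_Ftilde ha ht 0
  simpa using this

lemma Ftilde_pos (ha : 1 < a) {t : ℝ} (ht : a ≤ t) : 0 < Ftilde a t :=
  lt_of_lt_of_le (by linarith) (le_trans ht (le_Ftilde ha ht))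

lemma hasDerivAt_iter (ha : 1 < a) {t : ℝ} (ht : a ≤ t) (k : ℕ) :
    HasDerivAt ((Fa a)^[k]) (∏ j ∈ Finset.range k, ((Fa a)^[j] t)⁻¹) t := by
  induction k with
  | zero => simpa using hasDerivAt_id t
  | succ k ih =>
    have hpos : 0 < (Fa a)^[k] t := iter_pos ha ht k
    have hF : HasDerivAt (Fa a) (((Fa a)^[k] t)⁻¹) ((Fa a)^[k] t) := by
      exact (Real.hasDerivAt_log (ne_of_gt hpos)).const_add (a - Real.log a)
    have h2 := hF.comp t ih
    rw [Function.iterate_succ']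
    rw [Finset.prod_range_succ, mul_comm]
    exact h2

lemma iter_continuousAt (ha : 1 < a) {t : ℝ} (ht : a ≤ t) (k : ℕ) :
    ContinuousAt ((Fa a)^[k]) t :=
  (hasDerivAt_iter ha ht k).continuousAt

lemma measurable_iter (k : ℕ) : Measurable ((Fa a)^[k]) := by
  induction k with
  | zero => simpa using measurable_id
  | succ k ih =>
    rw [Function.iterate_succ']
    exact (measurable_const.add Real.measurable_log).comp ih

/-- The comparison integrand. -/
noncomputable def gComp (a : ℝ) (n : ℕ) (t : ℝ) : ℝ :=
  a ^ n * ∏ j ∈ Finset.range (n + 1), ((Fa a)^[j] t)⁻¹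

lemma gComp_continuousAt (ha : 1 < a) (n : ℕ) {t : ℝ} (ht : a ≤ t) :
    ContinuousAt (gComp a n) t := by
  refine continuousAt_const.mul ?_
  refine tendsto_finset_prod _ fun j _ => ?_
  exact ((iter_continuousAt ha ht j).inv₀ (ne_of_gt (iter_pos ha ht j)))

lemma gComp_intervalIntegrable (ha : 1 < a) (n : ℕ) {u : ℝ} (hu : a ≤ u) :
    IntervalIntegrable (gComp a n) volume a u := by
  refine ContinuousOn.intervalIntegrable ?_
  intro t htm
  rw [uIcc_of_le hu] at htm
  exact (gComp_continuousAt ha n htm.1).continuousWithinAt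

lemma integral_gComp (ha : 1 < a) (n : ℕ) {u : ℝ} (hu : a ≤ u) :
    ∫ t in a..u, gComp a n t = a ^ n * ((Fa a)^[n + 1] u - a) := by
  have hFTC := intervalIntegral.integral_eq_sub_of_hasDerivAt
    (f := fun t => a ^ n * (Fa a)^[n + 1] t) (f' := gComp a n) (a := a) (b := u)
    (fun t htm => by
      rw [uIcc_of_le hu] at htm
      exact ((hasDerivAt_iter ha htm.1 (n + 1)).const_mul (a ^ n)))
    (gComp_intervalIntegrable ha n hu)
  rw [hFTC]
  simp only [Function.iterate_fixed (Fa_fixed ha)]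
  ring

lemma one_div_Ftilde_le_gComp (ha : 1 < a) (n : ℕ) {t : ℝ} (ht : a ≤ t) :
    1 / Ftilde a t ≤ gComp a n t := by
  set P := ∏ k ∈ Finset.range (n + 1), (Fa a)^[k] t with hP
  have hPpos : 0 < P :=
    Finset.prod_pos fun k _ => iter_pos ha ht k
  have hlow : P / a ^ n ≤ Ftilde a t := prod_le_Ftilde ha ht n
  have hlowpos : 0 < P / a ^ n := by positivity
  have h1 : 1 / Ftilde a t ≤ 1 / (P / a ^ n) :=
    one_div_le_one_div_of_le hlowpos hlow
  have h2 : 1 / (P / a ^ n) = a ^ n / P := one_div_div _ _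
  have h3 : gComp a n t = a ^ n / P := by
    rw [gComp, Finset.prod_inv_distrib, div_eq_mul_inv]
  rw [h3]
  linarith [h1, h2]

lemma aemeas_one_div_Ftilde (ha : 1 < a) {u : ℝ} (hu : a ≤ u) :
    AEMeasurable (fun t => 1 / Ftilde a t) (volume.restrict (Set.Ioc a u)) := by
  have hFt : AEMeasurable (Ftilde a) (volume.restrict (Set.Ioc a u)) := by
    refine aemeasurable_of_tendsto_metrizable_ae (f := fun m t =>
      a * ∏ k ∈ Finset.range m, ((Fa a)^[k] t / a)) atTop (fun m => ?_) ?_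
    · exact (measurable_const.mul
        (Finset.measurable_prod _ fun k _ => (measurable_iter k).div measurable_const)).aemeasurable
    · rw [ae_restrict_iff' measurableSet_Ioc]
      refine Eventually.of_forall fun t htm => ?_
      have hm : Multipliable fun k : ℕ => (Fa a)^[k] t / a :=
        multipliable_term ha (le_of_lt htm.1)
      exact (hm.hasProd.tendsto_prod_nat).const_mul a
  simpa only [one_div, Pi.inv_def] using hFt.inv

lemma intervalIntegrable_one_div_Ftilde (ha : 1 < a) {u : ℝ} (hu : a ≤ u) :
    IntervalIntegrable (fun t => 1 / Ftilde a t) volume a u := by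
  rw [intervalIntegrable_iff_integrableOn_Ioc_of_le hu]
  refine Integrable.mono' (g := fun _ => 1 / a)
    (integrableOn_const measure_Ioc_lt_top.ne)
    (aemeas_one_div_Ftilde ha hu).aestronglyMeasurable ?_
  rw [ae_restrict_iff' measurableSet_Ioc]
  refine Eventually.of_forall fun t htm => ?_
  have hta : a ≤ t := le_of_lt htm.1
  have hpos : 0 < Ftilde a t := Ftilde_pos ha hta
  have hge : a ≤ Ftilde a t := le_trans hta (le_Ftilde ha hta)
  rw [Real.norm_eq_abs, abs_of_nonneg (by positivity)]
  exact one_div_le_one_div_of_le (by linarith) hge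

lemma phi_le (ha : 1 < a) (n : ℕ) {u : ℝ} (hu : a ≤ u) :
    phiFun a u ≤ a + a ^ n * ((Fa a)^[n + 1] u - a) := by
  have hmono : (∫ t in a..u, 1 / Ftilde a t) ≤ ∫ t in a..u, gComp a n t := by
    refine intervalIntegral.integral_mono_on hu
      (intervalIntegrable_one_div_Ftilde ha hu) (gComp_intervalIntegrable ha n hu)
      fun t htm => one_div_Ftilde_le_gComp ha n htm.1
  rw [phiFun]
  have := integral_gComp ha n hu
  linarith

lemma phi_nonneg (ha : 1 < a) {u : ℝ} (hu : a ≤ u) : 0 ≤ phiFun a u := by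
  have hint : 0 ≤ ∫ t in a..u, 1 / Ftilde a t := by
    refine intervalIntegral.integral_nonneg hu fun t htm => ?_
    have := Ftilde_pos ha htm.1
    positivity
  rw [phiFun]; linarith

lemma iter_tendsto (ha : 1 < a) (k : ℕ) : Tendsto ((Fa a)^[k]) atTop atTop := by
  induction k with
  | zero => simpa using tendsto_id
  | succ k ih =>
    rw [Function.iterate_succ']
    have hF : Tendsto (Fa a) atTop atTop :=
      tendsto_atTop_add_const_left _ _ Real.tendsto_log_atTop
    exact hF.comp ih

end Stmt4Aux

/-- For each `n ∈ ℕ`, `lim_{u→∞} φ(u)/F^n(u) = 0`. -/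
theorem stmt4 (a : ℝ) (ha : 1 < a) (n : ℕ) :
    Filter.Tendsto (fun u : ℝ => phiFun a u / (Fa a)^[n] u) Filter.atTop (nhds 0) := by
  have hFn := Stmt4Aux.iter_tendsto ha n
  -- the limit of the bounding function
  have hψ : Tendsto (fun v : ℝ => (a + a ^ n * (Fa a v - a)) / v) atTop (𝓝 0) := by
    have h1 : Tendsto (fun v : ℝ => Real.log v / v) atTop (𝓝 0) :=
      Real.isLittleO_log_id_atTop.tendsto_div_nhds_zero
    have h2 : Tendsto (fun v : ℝ => (a - a ^ n * Real.log a) * v⁻¹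
        + a ^ n * (Real.log v / v)) atTop
        (𝓝 ((a - a ^ n * Real.log a) * 0 + a ^ n * 0)) :=
      (tendsto_inv_atTop_zero.const_mul _).add (h1.const_mul _)
    rw [mul_zero, mul_zero, add_zero] at h2
    refine h2.congr' ?_
    filter_upwards [eventually_gt_atTop (0 : ℝ)] with v hv
    rw [Fa]
    field_simp
    ring
  have hB : Tendsto (fun u : ℝ =>
      (a + a ^ n * ((Fa a)^[n + 1] u - a)) / (Fa a)^[n] u) atTop (𝓝 0) := by
    have := hψ.comp hFn
    refine this.congr fun u => ?_
    simp only [Function.comp_apply, Function.iterate_succ_apply']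
  refine squeeze_zero' ?_ ?_ hB
  · filter_upwards [eventually_ge_atTop a] with u hu
    exact div_nonneg (Stmt4Aux.phi_nonneg ha hu)
      (le_trans (by linarith) (Stmt4Aux.le_iter ha hu n))
  · filter_upwards [eventually_ge_atTop a] with u hu
    have hden : 0 < (Fa a)^[n] u := Stmt4Aux.iter_pos ha hu n
    exact div_le_div_of_nonneg_right (Stmt4Aux.phi_le ha n hu) hden.le
end

section
/- The super-logarithm L is continuous and strictly increasing on (0,∞) with L(1) = 0, L(r) → −∞ as r → 0+ and L(r) → ∞ as r → ∞ (so L is a bijection of (0,∞) onto ℝ); L is differentiable on (0,∞); L is concave on [1,∞); and if moreover a ≥ 2, then L is concave on all of (0,∞). -/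
open Real MeasureTheory Filter Topology Set

/-- The super-logarithm: `L(r) = φ(ar) - a` for `r ≥ 1` and `L(r) = -L(1/r)` for `0 < r < 1`. -/
noncomputable def superLog (a : ℝ) (r : ℝ) : ℝ :=
  if 1 ≤ r then phiFun a (a * r) - a else -(phiFun a (a * (1 / r)) - a)

namespace SLaux

variable {a : ℝ}

lemma apos (ha : 1 < a) : (0:ℝ) < a := lt_trans one_pos ha

lemma fa_fixed (_ : 1 < a) : Fa a a = a := by simp [Fa]

lemma fa_ge (ha : 1 < a) {u : ℝ} (hu : a ≤ u) : a ≤ Fa a u := by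
  have h : Real.log a ≤ Real.log u := Real.log_le_log (apos ha) hu
  simp only [Fa]; linarith

lemma fa_mono (ha : 1 < a) {u v : ℝ} (hu : a ≤ u) (huv : u ≤ v) : Fa a u ≤ Fa a v := by
  have h : Real.log u ≤ Real.log v := Real.log_le_log (lt_of_lt_of_le (apos ha) hu) huv
  simp only [Fa]; linarith

lemma fa_diff (ha : 1 < a) {u v : ℝ} : Fa a v - Fa a u = Real.log v - Real.log u := by
  simp only [Fa]; ring

lemma fa_contract (ha : 1 < a) {u v : ℝ} (hu : a ≤ u) (huv : u ≤ v) :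
    Fa a v - Fa a u ≤ (v - u) / a := by
  have hu0 : 0 < u := lt_of_lt_of_le (apos ha) hu
  have hv0 : 0 < v := lt_of_lt_of_le hu0 huv
  have h1 : Real.log v - Real.log u = Real.log (v / u) := (Real.log_div (ne_of_gt hv0) (ne_of_gt hu0)).symm
  have h2 : Real.log (v / u) ≤ v / u - 1 := Real.log_le_sub_one_of_pos (by positivity)
  have h3 : v / u - 1 = (v - u) / u := by field_simp
  have h4 : (v - u) / u ≤ (v - u) / a := by
    apply div_le_div_of_nonneg_left (by linarith) (apos ha) hu
  rw [fa_diff ha, h1]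
  calc Real.log (v/u) ≤ v/u - 1 := h2
    _ = (v-u)/u := h3
    _ ≤ (v-u)/a := h4

lemma iter_ge (ha : 1 < a) (k : ℕ) {u : ℝ} (hu : a ≤ u) : a ≤ (Fa a)^[k] u := by
  induction k with
  | zero => simpa
  | succ n ih => rw [Function.iterate_succ_apply']; exact fa_ge ha ih

lemma iter_fixed (ha : 1 < a) (k : ℕ) : (Fa a)^[k] a = a := by
  induction k with
  | zero => simp
  | succ n ih => rw [Function.iterate_succ_apply', ih, fa_fixed ha]

lemma iter_mono (ha : 1 < a) (k : ℕ) {u v : ℝ} (hu : a ≤ u) (huv : u ≤ v) :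
    (Fa a)^[k] u ≤ (Fa a)^[k] v := by
  induction k with
  | zero => simpa
  | succ n ih =>
    rw [Function.iterate_succ_apply', Function.iterate_succ_apply']
    exact fa_mono ha (iter_ge ha n hu) ih

lemma iter_contract (ha : 1 < a) (k : ℕ) {u v : ℝ} (hu : a ≤ u) (huv : u ≤ v) :
    (Fa a)^[k] v - (Fa a)^[k] u ≤ (v - u) / a ^ k := by
  induction k with
  | zero => simp
  | succ n ih =>
    rw [Function.iterate_succ_apply', Function.iterate_succ_apply']
    have h1 := fa_contract ha (iter_ge ha n hu) (iter_mono ha n hu huv)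
    have h2 : ((Fa a)^[n] v - (Fa a)^[n] u) / a ≤ ((v - u) / a ^ n) / a := by
      gcongr
    calc Fa a ((Fa a)^[n] v) - Fa a ((Fa a)^[n] u) ≤ ((Fa a)^[n] v - (Fa a)^[n] u) / a := h1
      _ ≤ ((v - u) / a ^ n) / a := h2
      _ = (v - u) / a ^ (n+1) := by rw [div_div, ← pow_succ]

lemma summable_iter (ha : 1 < a) {w : ℝ} (hw : a ≤ w) :
    Summable (fun j : ℕ => (Fa a)^[j] w - a) := by
  have hgeo : Summable (fun j : ℕ => (w - a) * (1/a)^j) :=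
    (summable_geometric_of_lt_one (by positivity) (by rw [div_lt_one (apos ha)]; linarith)).mul_left _
  refine Summable.of_nonneg_of_le (fun j => sub_nonneg.2 (iter_ge ha j hw)) (fun j => ?_) hgeo
  have := iter_contract ha j le_rfl hw
  rw [iter_fixed ha j] at this
  calc (Fa a)^[j] w - a ≤ (w - a) / a ^ j := this
    _ = (w - a) * (1/a)^j := by rw [div_pow, one_pow]; ring

/-- `T w = ∑_j (F^j w - a)`. -/
noncomputable def T (a w : ℝ) : ℝ := ∑' j : ℕ, ((Fa a)^[j] w - a)

lemma T_nonneg (ha : 1 < a) {w : ℝ} (hw : a ≤ w) : 0 ≤ T a w :=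
  tsum_nonneg (fun j => sub_nonneg.2 (iter_ge ha j hw))

lemma T_ge_first (ha : 1 < a) {w : ℝ} (hw : a ≤ w) : w - a ≤ T a w := by
  have := Summable.le_tsum (summable_iter ha hw) 0 (fun j _ => sub_nonneg.2 (iter_ge ha j hw))
  simpa [T] using this

lemma T_fixed (ha : 1 < a) : T a a = 0 := by
  simp [T, iter_fixed ha]

lemma T_mono (ha : 1 < a) {w w' : ℝ} (hw : a ≤ w) (h : w ≤ w') : T a w ≤ T a w' :=
  Summable.tsum_le_tsum (fun j => sub_le_sub_right (iter_mono ha j hw h) a)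
    (summable_iter ha hw) (summable_iter ha (le_trans hw h))

lemma T_sub_le (ha : 1 < a) {w w' : ℝ} (hw : a ≤ w) (h : w ≤ w') :
    T a w' - T a w ≤ (w' - w) * (a / (a - 1)) := by
  have hsw := summable_iter ha hw
  have hsw' := summable_iter ha (le_trans hw h)
  have h1 : T a w' - T a w = ∑' j : ℕ, ((Fa a)^[j] w' - (Fa a)^[j] w) := by
    rw [T, T, ← Summable.tsum_sub hsw' hsw]
    congr 1; ext j; ring
  rw [h1]
  have h2 : ∑' j : ℕ, ((Fa a)^[j] w' - (Fa a)^[j] w) ≤ ∑' j : ℕ, (w' - w) * (1/a)^j := by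
    apply Summable.tsum_le_tsum
    · intro j
      have := iter_contract ha j hw h
      calc (Fa a)^[j] w' - (Fa a)^[j] w ≤ (w' - w)/a^j := this
        _ = (w' - w) * (1/a)^j := by rw [div_pow, one_pow]; ring
    · have : (fun j : ℕ => (Fa a)^[j] w' - (Fa a)^[j] w)
          = fun j => ((Fa a)^[j] w' - a) - ((Fa a)^[j] w - a) := by ext j; ring
      rw [this]; exact hsw'.sub hsw
    · exact (summable_geometric_of_lt_one (by positivity) (by rw [div_lt_one (apos ha)]; linarith)).mul_left _
  rw [tsum_mul_left, tsum_geometric_of_lt_one (by positivity) (by rw [div_lt_one (apos ha)]; linarith)] at h2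
  have ha1 : a - 1 ≠ 0 := by intro h; have : a = 1 := by linarith
                             exact absurd this (ne_of_gt ha)
  have h3 : (1 - 1/a)⁻¹ = a / (a - 1) := by
    rw [show (1 - 1/a) = (a - 1)/a by field_simp, inv_div]
  rw [h3] at h2
  exact h2

lemma T_shift (ha : 1 < a) {w : ℝ} (hw : a ≤ w) : T a w = (w - a) + T a (Fa a w) := by
  have h := Summable.tsum_eq_zero_add (summable_iter ha hw)
  simp only [Function.iterate_zero_apply] at h
  simp only [T]
  rw [h]
  have : ∀ j : ℕ, (Fa a)^[j + 1] w - a = (Fa a)^[j] (Fa a w) - a := by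
    intro j; rw [Function.iterate_succ_apply]
  rw [tsum_congr this]

lemma iter_pos (ha : 1 < a) (k : ℕ) {u : ℝ} (hu : a ≤ u) : 0 < (Fa a)^[k] u :=
  lt_of_lt_of_le (apos ha) (iter_ge ha k hu)

lemma log_iter (ha : 1 < a) {u : ℝ} (hu : a ≤ u) (k : ℕ) :
    Real.log ((Fa a)^[k] u / a) = (Fa a)^[k+1] u - a := by
  rw [Real.log_div (ne_of_gt (iter_pos ha k hu)) (ne_of_gt (apos ha)),
    Function.iterate_succ_apply']
  simp only [Fa]; ring

lemma ftilde_eq (ha : 1 < a) {u : ℝ} (hu : a ≤ u) :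
    Ftilde a u = a * Real.exp (T a (Fa a u)) := by
  have hs : HasSum (fun k : ℕ => (Fa a)^[k] (Fa a u) - a) (T a (Fa a u)) :=
    (summable_iter ha (fa_ge ha hu)).hasSum
  have hs' : HasSum (fun k : ℕ => (Fa a)^[k+1] u - a) (T a (Fa a u)) := by
    have : (fun k : ℕ => (Fa a)^[k+1] u - a) = fun k : ℕ => (Fa a)^[k] (Fa a u) - a := by
      ext k; rw [Function.iterate_succ_apply]
    rw [this]; exact hs
  have hp : HasProd (fun k : ℕ => Real.exp ((Fa a)^[k+1] u - a)) (Real.exp (T a (Fa a u))) :=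
    hs'.rexp
  have hfun : (fun k : ℕ => Real.exp ((Fa a)^[k+1] u - a)) = fun k : ℕ => (Fa a)^[k] u / a := by
    ext k
    have h1 : 0 < (Fa a)^[k] u / a := div_pos (iter_pos ha k hu) (apos ha)
    rw [← log_iter ha hu k, Real.exp_log h1]
  rw [hfun] at hp
  rw [Ftilde, hp.tprod_eq]

lemma exp_fa_sub (ha : 1 < a) {u : ℝ} (hu : a ≤ u) :
    Real.exp (Fa a u - a) = u / a := by
  have hu0 : 0 < u := lt_of_lt_of_le (apos ha) hu
  rw [show Fa a u - a = Real.log u - Real.log a by simp only [Fa]; ring,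
    Real.exp_sub, Real.exp_log hu0, Real.exp_log (apos ha)]

lemma ftilde_ge (ha : 1 < a) {u : ℝ} (hu : a ≤ u) : u ≤ Ftilde a u := by
  rw [ftilde_eq ha hu]
  have h1 : Fa a u - a ≤ T a (Fa a u) := T_ge_first ha (fa_ge ha hu)
  calc u = a * Real.exp (Fa a u - a) := by
        rw [exp_fa_sub ha hu]; field_simp
    _ ≤ a * Real.exp (T a (Fa a u)) := by
        apply mul_le_mul_of_nonneg_left (Real.exp_le_exp.2 h1) (apos ha).le

lemma ftilde_ge_a (ha : 1 < a) {u : ℝ} (hu : a ≤ u) : a ≤ Ftilde a u :=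
  le_trans hu (ftilde_ge ha hu)

lemma ftilde_pos (ha : 1 < a) {u : ℝ} (hu : a ≤ u) : 0 < Ftilde a u :=
  lt_of_lt_of_le (apos ha) (ftilde_ge_a ha hu)

lemma ftilde_mono (ha : 1 < a) {u v : ℝ} (hu : a ≤ u) (huv : u ≤ v) :
    Ftilde a u ≤ Ftilde a v := by
  rw [ftilde_eq ha hu, ftilde_eq ha (le_trans hu huv)]
  exact mul_le_mul_of_nonneg_left
    (Real.exp_le_exp.2 (T_mono ha (fa_ge ha hu) (fa_mono ha hu huv))) (apos ha).le

lemma ftilde_at_a (ha : 1 < a) : Ftilde a a = a := by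
  rw [ftilde_eq ha le_rfl, fa_fixed ha, T_fixed ha, Real.exp_zero, mul_one]

lemma ftilde_funeq (ha : 1 < a) {w : ℝ} (hw : a ≤ w) :
    Ftilde a (Fa a w) * w = a * Ftilde a w := by
  rw [ftilde_eq ha (fa_ge ha hw), ftilde_eq ha hw, T_shift ha (fa_ge ha hw), Real.exp_add,
    exp_fa_sub ha hw]
  have hw0 : 0 < w := lt_of_lt_of_le (apos ha) hw
  field_simp

lemma ftilde_ratio (ha : 1 < a) (ha2 : 2 ≤ a) {u v : ℝ} (hu : a ≤ u) (huv : u ≤ v) :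
    Ftilde a v * u ^ 2 ≤ Ftilde a u * v ^ 2 := by
  have hu0 : 0 < u := lt_of_lt_of_le (apos ha) hu
  have hv0 : 0 < v := lt_of_lt_of_le hu0 huv
  have hFu : a ≤ Fa a u := fa_ge ha hu
  have hFv : a ≤ Fa a v := fa_ge ha (le_trans hu huv)
  have hFuv : Fa a u ≤ Fa a v := fa_mono ha hu huv
  set d : ℝ := Real.log v - Real.log u with hd
  have hd0 : 0 ≤ d := sub_nonneg.2 (Real.log_le_log hu0 huv)
  have hdd : Fa a v - Fa a u = d := fa_diff ha
  -- T (F v) - T (F u) ≤ 2 d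
  have key : T a (Fa a v) - T a (Fa a u) ≤ 2 * d := by
    have h1 : T a (Fa a v) = (Fa a v - a) + T a (Fa a (Fa a v)) := T_shift ha hFv
    have h2 : T a (Fa a u) = (Fa a u - a) + T a (Fa a (Fa a u)) := T_shift ha hFu
    have h3 : T a (Fa a (Fa a v)) - T a (Fa a (Fa a u)) ≤
        (Fa a (Fa a v) - Fa a (Fa a u)) * (a / (a-1)) :=
      T_sub_le ha (fa_ge ha hFu) (fa_mono ha hFu hFuv)
    have h4 : Fa a (Fa a v) - Fa a (Fa a u) ≤ d / a := by
      have := fa_contract ha hFu hFuv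
      rw [hdd] at this; exact this
    have h5 : 0 < a - 1 := by linarith
    have h6 : (Fa a (Fa a v) - Fa a (Fa a u)) * (a/(a-1)) ≤ (d / a) * (a/(a-1)) := by
      apply mul_le_mul_of_nonneg_right h4 (by positivity)
    have h7 : (d / a) * (a/(a-1)) = d / (a - 1) := by field_simp
    have h8 : d / (a - 1) ≤ d := by
      rw [div_le_iff₀ h5]
      nlinarith
    nlinarith [h3, h6]
  -- convert squares to exponentials
  have e1 : u ^ 2 = Real.exp (2 * Real.log u) := by
    rw [show (2:ℝ) * Real.log u = Real.log u + Real.log u by ring, Real.exp_add,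
      Real.exp_log hu0]; ring
  have e2 : v ^ 2 = Real.exp (2 * Real.log v) := by
    rw [show (2:ℝ) * Real.log v = Real.log v + Real.log v by ring, Real.exp_add,
      Real.exp_log hv0]; ring
  rw [ftilde_eq ha hu, ftilde_eq ha (le_trans hu huv), e1, e2, mul_assoc, mul_assoc,
    ← Real.exp_add, ← Real.exp_add]
  apply mul_le_mul_of_nonneg_left (Real.exp_le_exp.2 ?_) (apos ha).le
  have : 2 * Real.log v = 2 * Real.log u + 2 * d := by rw [hd]; ring
  rw [this]
  linarith [key]

lemma T_contOn (ha : 1 < a) : ContinuousOn (T a) (Ici a) := by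
  have hK : (0:ℝ) ≤ a / (a - 1) := by
    have : (0:ℝ) < a - 1 := by linarith
    positivity
  have : LipschitzOnWith (a / (a-1)).toNNReal (T a) (Ici a) := by
    apply LipschitzOnWith.of_dist_le_mul
    intro x hx y hy
    rw [Real.dist_eq, Real.dist_eq, Real.coe_toNNReal _ hK]
    rcases le_total x y with h | h
    · have h1 : T a x ≤ T a y := T_mono ha hx h
      have h2 : T a y - T a x ≤ (y - x) * (a/(a-1)) := T_sub_le ha hx h
      rw [abs_of_nonpos (by linarith), abs_of_nonpos (by linarith)]
      nlinarith
    · have h1 : T a y ≤ T a x := T_mono ha hy h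
      have h2 : T a x - T a y ≤ (x - y) * (a/(a-1)) := T_sub_le ha hy h
      rw [abs_of_nonneg (by linarith), abs_of_nonneg (by linarith)]
      nlinarith
  exact this.continuousOn

lemma fa_contOn (ha : 1 < a) : ContinuousOn (Fa a) (Ici a) := by
  apply continuousOn_const.add
  apply Real.continuousOn_log.mono
  intro x hx
  simp only [mem_compl_iff, mem_singleton_iff]
  exact ne_of_gt (lt_of_lt_of_le (apos ha) hx)

lemma ftilde_contOn (ha : 1 < a) : ContinuousOn (Ftilde a) (Ici a) := by
  have h1 : ContinuousOn (fun u => a * Real.exp (T a (Fa a u))) (Ici a) := by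
    apply continuousOn_const.mul
    apply Real.continuous_exp.comp_continuousOn
    exact (T_contOn ha).comp (fa_contOn ha) (fun x hx => fa_ge ha hx)
  exact h1.congr (fun u hu => ftilde_eq ha hu)

/-- Continuous extension of `Ftilde` to all of `ℝ`. -/
noncomputable def Fhat (a t : ℝ) : ℝ := Ftilde a (max t a)

lemma fhat_eq (ha : 1 < a) {u : ℝ} (hu : a ≤ u) : Fhat a u = Ftilde a u := by
  rw [Fhat, max_eq_left hu]

lemma fhat_ge_a (ha : 1 < a) (t : ℝ) : a ≤ Fhat a t :=
  ftilde_ge_a ha (le_max_right t a)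

lemma fhat_pos (ha : 1 < a) (t : ℝ) : 0 < Fhat a t :=
  lt_of_lt_of_le (apos ha) (fhat_ge_a ha t)

lemma fhat_cont (ha : 1 < a) : Continuous (Fhat a) := by
  apply (ftilde_contOn ha).comp_continuous (continuous_id.max continuous_const)
  intro t; exact mem_Ici.2 (le_max_right t a)

lemma ginv_cont (ha : 1 < a) : Continuous (fun t => 1 / Fhat a t) :=
  continuous_const.div (fhat_cont ha) (fun t => ne_of_gt (fhat_pos ha t))

/-- Extended `φ`. -/
noncomputable def Phat (a u : ℝ) : ℝ := a + ∫ t in a..u, 1 / Fhat a t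

lemma phat_hasDeriv (ha : 1 < a) (u : ℝ) : HasDerivAt (Phat a) (1 / Fhat a u) u := by
  exact (((ginv_cont ha).integral_hasStrictDerivAt a u).hasDerivAt).const_add a

lemma phat_sub (ha : 1 < a) (u v : ℝ) :
    Phat a v - Phat a u = ∫ t in u..v, 1 / Fhat a t := by
  have h := intervalIntegral.integral_add_adjacent_intervals (μ := volume)
    ((ginv_cont ha).intervalIntegrable a u) ((ginv_cont ha).intervalIntegrable u v)
  simp only [Phat]
  linarith

lemma phat_strictMono (ha : 1 < a) : StrictMono (Phat a) := by
  intro u v huv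
  have h := phat_sub ha u v
  have hpos : 0 < ∫ t in u..v, 1 / Fhat a t := by
    apply intervalIntegral.intervalIntegral_pos_of_pos
      ((ginv_cont ha).intervalIntegrable u v) _ huv
    intro x
    exact div_pos one_pos (fhat_pos ha x)
  linarith

lemma phat_mono (ha : 1 < a) : Monotone (Phat a) := (phat_strictMono ha).monotone

lemma phat_at_a (ha : 1 < a) : Phat a a = a := by
  simp [Phat, intervalIntegral.integral_same]

/-- Inverse of `Fa`: `Gi u = a e^{u-a}`. -/
noncomputable def Gi (a u : ℝ) : ℝ := a * Real.exp (u - a)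

lemma gi_at_a (ha : 1 < a) : Gi a a = a := by simp [Gi]

lemma fa_gi (ha : 1 < a) (u : ℝ) : Fa a (Gi a u) = u := by
  simp only [Fa, Gi]
  rw [Real.log_mul (ne_of_gt (apos ha)) (Real.exp_ne_zero _), Real.log_exp]
  ring

lemma gi_ge_self (ha : 1 < a) {u : ℝ} (hu : a ≤ u) : u ≤ Gi a u := by
  have h1 : 1 + (u - a) ≤ Real.exp (u - a) := by
    have := Real.add_one_le_exp (u - a); linarith
  have : a * (1 + (u - a)) ≤ a * Real.exp (u - a) :=
    mul_le_mul_of_nonneg_left h1 (apos ha).le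
  simp only [Gi]
  nlinarith

lemma gi_ge_a (ha : 1 < a) {u : ℝ} (hu : a ≤ u) : a ≤ Gi a u :=
  le_trans hu (gi_ge_self ha hu)

lemma gi_hasDeriv (ha : 1 < a) (x : ℝ) : HasDerivAt (Gi a) (Gi a x) x := by
  have h : HasDerivAt (fun x : ℝ => x - a) 1 x := (hasDerivAt_id x).sub_const a
  have h2 := (h.exp).const_mul a
  show HasDerivAt (fun y => a * Real.exp (y - a)) (a * Real.exp (x - a)) x
  simpa using h2

lemma gi_cont (ha : 1 < a) : Continuous (Gi a) :=
  continuous_const.mul (Real.continuous_exp.comp (continuous_id.sub continuous_const))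

lemma phat_funeq (ha : 1 < a) {u : ℝ} (hu : a ≤ u) :
    Phat a (Gi a u) - a = a * (Phat a u - a) := by
  have hsubst := intervalIntegral.integral_comp_smul_deriv
    (f := Gi a) (f' := Gi a) (g := fun t => 1 / Fhat a t) (a := a) (b := u)
    (fun x _ => gi_hasDeriv ha x)
    ((gi_cont ha).continuousOn)
    (ginv_cont ha)
  rw [gi_at_a ha] at hsubst
  -- rewrite LHS integrand
  have hcong : EqOn (fun x => Gi a x • ((fun t => 1 / Fhat a t) ∘ Gi a) x)
      (fun x => a * (1 / Fhat a x)) (uIcc a u) := by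
    intro x hx
    rw [uIcc_of_le hu] at hx
    have hxa : a ≤ x := hx.1
    have hgx : a ≤ Gi a x := gi_ge_a ha hxa
    have hfe := ftilde_funeq ha hgx
    rw [fa_gi ha x] at hfe
    -- hfe : Ftilde a x * Gi a x = a * Ftilde a (Gi a x)
    simp only [Function.comp, smul_eq_mul]
    rw [fhat_eq ha hgx, fhat_eq ha hxa]
    have h1 : Ftilde a x ≠ 0 := ne_of_gt (ftilde_pos ha hxa)
    have h2 : Ftilde a (Gi a x) ≠ 0 := ne_of_gt (ftilde_pos ha hgx)
    field_simp
    linarith [hfe]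
  rw [intervalIntegral.integral_congr hcong] at hsubst
  rw [intervalIntegral.integral_const_mul] at hsubst
  have h1 : Phat a u - a = ∫ t in a..u, 1 / Fhat a t := by simp [Phat]
  have h2 : Phat a (Gi a u) - a = ∫ t in a..(Gi a u), 1 / Fhat a t := by simp [Phat]
  rw [h1, h2, ← hsubst]

lemma phat_iter_gi (ha : 1 < a) (n : ℕ) :
    a ≤ (Gi a)^[n] (a+1) ∧
    Phat a ((Gi a)^[n] (a+1)) - a = a ^ n * (Phat a (a+1) - a) := by
  induction n with
  | zero => simp
  | succ n ih =>
    obtain ⟨h1, h2⟩ := ih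
    constructor
    · rw [Function.iterate_succ_apply']; exact gi_ge_a ha h1
    · rw [Function.iterate_succ_apply', phat_funeq ha h1, h2, pow_succ]
      ring

lemma phat_tendsto_atTop (ha : 1 < a) : Tendsto (Phat a) atTop atTop := by
  apply tendsto_atTop_atTop_of_monotone (phat_mono ha)
  intro b
  have hc : 0 < Phat a (a+1) - a := by
    have := phat_strictMono ha (show a < a + 1 by linarith)
    rw [phat_at_a ha] at this
    linarith
  set c := Phat a (a+1) - a with hcdef
  have hpow := tendsto_pow_atTop_atTop_of_one_lt ha
  obtain ⟨n, hn⟩ := (hpow.eventually_ge_atTop ((b - a)/c)).exists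
  refine ⟨(Gi a)^[n] (a+1), ?_⟩
  obtain ⟨h1, h2⟩ := phat_iter_gi ha n
  rw [← hcdef] at h2
  have : (b - a)/c * c ≤ a ^ n * c := mul_le_mul_of_nonneg_right hn hc.le
  rw [div_mul_cancel₀ _ (ne_of_gt hc)] at this
  linarith [h2]

lemma phi_eq (ha : 1 < a) {u : ℝ} (hu : a ≤ u) : phiFun a u = Phat a u := by
  simp only [phiFun, Phat]
  congr 1
  apply intervalIntegral.integral_congr
  intro t ht
  rw [uIcc_of_le hu] at ht
  show 1 / Ftilde a t = 1 / Fhat a t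
  rw [fhat_eq ha ht.1]

lemma sl_eq_H (ha : 1 < a) {r : ℝ} (hr : 1 ≤ r) :
    superLog a r = Phat a (a * r) - a := by
  rw [superLog, if_pos hr, phi_eq ha (by nlinarith [apos ha] : a ≤ a * r)]

lemma one_le_ar (ha : 1 < a) {r : ℝ} (h0 : 0 < r) (h1 : r ≤ 1) : a ≤ a * (1/r) := by
  have h2 : 1 ≤ 1/r := by rw [le_div_iff₀ h0]; linarith
  nlinarith [apos ha]

lemma sl_eq_G (ha : 1 < a) {r : ℝ} (h0 : 0 < r) (h1 : r < 1) :
    superLog a r = -(Phat a (a * (1/r)) - a) := by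
  rw [superLog, if_neg (not_le.2 h1), phi_eq ha (one_le_ar ha h0 h1.le)]

lemma sl_one (ha : 1 < a) : superLog a 1 = 0 := by
  rw [sl_eq_H ha le_rfl, mul_one, phat_at_a ha, sub_self]

/-- derivative of the right branch -/
noncomputable def Dp (a r : ℝ) : ℝ := 1 / Fhat a (a * r) * a

/-- derivative of the left branch -/
noncomputable def Dm (a r : ℝ) : ℝ := 1 / Fhat a (a * (1/r)) * (a / r ^ 2)

lemma fhat_at_a (ha : 1 < a) : Fhat a a = a := by
  rw [fhat_eq ha le_rfl, ftilde_at_a ha]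

lemma Dp_one (ha : 1 < a) : Dp a 1 = 1 := by
  rw [Dp, mul_one, fhat_at_a ha]
  field_simp

lemma Dm_one (ha : 1 < a) : Dm a 1 = 1 := by
  rw [Dm]
  norm_num
  rw [fhat_at_a ha]
  field_simp

lemma H_hasDeriv (ha : 1 < a) (r : ℝ) :
    HasDerivAt (fun r => Phat a (a * r) - a) (Dp a r) r := by
  have hf : HasDerivAt (fun r : ℝ => a * r) a r := by
    simpa using (hasDerivAt_id r).const_mul a
  have := HasDerivAt.comp r (phat_hasDeriv ha (a * r)) hf
  have h2 := this.sub_const a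
  simpa [Dp, Function.comp, mul_comm] using h2

lemma G_hasDeriv (ha : 1 < a) {r : ℝ} (hr : r ≠ 0) :
    HasDerivAt (fun r => -(Phat a (a * (1/r)) - a)) (Dm a r) r := by
  have hf : HasDerivAt (fun r : ℝ => a * (1/r)) (a * (-(r^2)⁻¹)) r := by
    simpa [one_div] using (hasDerivAt_inv hr).const_mul a
  have h1 := HasDerivAt.comp r (phat_hasDeriv ha (a * (1/r))) hf
  have h2 := (h1.sub_const a).neg
  have h3 : -(1 / Fhat a (a * (1/r)) * (a * (-(r^2)⁻¹))) = Dm a r := by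
    rw [Dm]; field_simp
  rw [← h3]
  exact h2

/-- the derivative of superLog -/
noncomputable def DD (a r : ℝ) : ℝ := if 1 ≤ r then Dp a r else Dm a r

lemma sl_hasDeriv (ha : 1 < a) {r : ℝ} (hr : 0 < r) :
    HasDerivAt (superLog a) (DD a r) r := by
  rcases lt_trichotomy r 1 with h1 | h1 | h1
  · have hev : superLog a =ᶠ[𝓝 r] fun r => -(Phat a (a * (1/r)) - a) := by
      apply Filter.eventuallyEq_of_mem (isOpen_Ioo.mem_nhds (⟨hr, h1⟩ : r ∈ Ioo (0:ℝ) 1))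
      intro x hx
      exact sl_eq_G ha hx.1 hx.2
    rw [DD, if_neg (not_le.2 h1)]
    exact (hev.hasDerivAt_iff).2 (G_hasDeriv ha (ne_of_gt hr))
  · subst h1
    have hIci : HasDerivWithinAt (superLog a) 1 (Ici 1) 1 := by
      have h := ((H_hasDeriv ha 1).hasDerivWithinAt (s := Ici 1))
      rw [Dp_one ha] at h
      apply h.congr (fun x hx => sl_eq_H ha hx) (sl_eq_H ha le_rfl)
    have hIoc : HasDerivWithinAt (superLog a) 1 (Ioc 0 1) 1 := by
      have h := ((G_hasDeriv ha one_ne_zero).hasDerivWithinAt (s := Ioc 0 1))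
      rw [Dm_one ha] at h
      apply h.congr
      · intro x hx
        rcases eq_or_lt_of_le hx.2 with h2 | h2
        · subst h2
          rw [sl_one ha]
          norm_num
          rw [phat_at_a ha]; ring
        · exact sl_eq_G ha hx.1 h2
      · rw [sl_one ha]
        norm_num
        rw [phat_at_a ha]; ring
    have hunion := hIoc.union hIci
    have hset : Ioc (0:ℝ) 1 ∪ Ici 1 = Ioi 0 := by
      ext x
      simp only [mem_union, mem_Ioc, mem_Ici, mem_Ioi]
      constructor
      · rintro (⟨h1, _⟩ | h2)
        · exact h1
        · linarith
      · intro hx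
        rcases le_total x 1 with h | h
        · exact Or.inl ⟨hx, h⟩
        · exact Or.inr h
    rw [hset] at hunion
    have := hunion.hasDerivAt (Ioi_mem_nhds one_pos)
    rw [DD, if_pos le_rfl, Dp_one ha]
    exact this
  · have hev : superLog a =ᶠ[𝓝 r] fun r => Phat a (a * r) - a := by
      apply Filter.eventuallyEq_of_mem (isOpen_Ioi.mem_nhds (h1 : r ∈ Ioi (1:ℝ)))
      intro x hx
      exact sl_eq_H ha (le_of_lt hx)
    rw [DD, if_pos h1.le]
    exact (hev.hasDerivAt_iff).2 (H_hasDeriv ha r)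

lemma Dp_anti (ha : 1 < a) {s s' : ℝ} (hs : 1 ≤ s) (hss : s ≤ s') : Dp a s' ≤ Dp a s := by
  have h1 : a ≤ a * s := by nlinarith [apos ha]
  have h2 : a * s ≤ a * s' := by nlinarith [apos ha]
  rw [Dp, Dp, fhat_eq ha h1, fhat_eq ha (h1.trans h2)]
  apply mul_le_mul_of_nonneg_right _ (apos ha).le
  exact one_div_le_one_div_of_le (ftilde_pos ha h1) (ftilde_mono ha h1 h2)

lemma Dm_anti (ha : 1 < a) (ha2 : 2 ≤ a) {s s' : ℝ} (hs : 0 < s) (hss : s ≤ s')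
    (hs1 : s' ≤ 1) : Dm a s' ≤ Dm a s := by
  have hs'0 : 0 < s' := lt_of_lt_of_le hs hss
  set u := a * (1/s') with hu_def
  set v := a * (1/s) with hv_def
  have hu : a ≤ u := one_le_ar ha hs'0 hs1
  have huv : u ≤ v := by
    rw [hu_def, hv_def]
    have : 1/s' ≤ 1/s := by
      apply one_div_le_one_div_of_le hs hss
    nlinarith [apos ha]
  have hK := ftilde_ratio ha ha2 hu huv
  rw [Dm, Dm, ← hu_def, ← hv_def, fhat_eq ha hu, fhat_eq ha (hu.trans huv)]
  have e1 : a / s' ^ 2 = u ^ 2 / a := by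
    rw [hu_def]; field_simp
  have e2 : a / s ^ 2 = v ^ 2 / a := by
    rw [hv_def]; field_simp
  rw [e1, e2]
  have hFu := ftilde_pos ha hu
  have hFv := ftilde_pos ha (hu.trans huv)
  rw [div_mul_div_comm, div_mul_div_comm, one_mul, one_mul,
    div_le_div_iff₀ (by positivity) (by positivity)]
  nlinarith [hK, apos ha]

lemma DD_anti (ha : 1 < a) (ha2 : 2 ≤ a) : AntitoneOn (DD a) (Ioi 0) := by
  intro r hr r' hr' hle
  simp only [mem_Ioi] at hr hr'
  by_cases h1 : 1 ≤ r
  · rw [DD, DD, if_pos h1, if_pos (h1.trans hle)]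
    exact Dp_anti ha h1 hle
  · push_neg at h1
    by_cases h2 : 1 ≤ r'
    · rw [DD, DD, if_pos h2, if_neg (not_le.2 h1)]
      calc Dp a r' ≤ Dp a 1 := Dp_anti ha le_rfl h2
        _ = 1 := Dp_one ha
        _ = Dm a 1 := (Dm_one ha).symm
        _ ≤ Dm a r := Dm_anti ha ha2 hr h1.le le_rfl
    · push_neg at h2
      rw [DD, DD, if_neg (not_le.2 h2), if_neg (not_le.2 h1)]
      exact Dm_anti ha ha2 hr hle h2.le

lemma DD_anti_Ioi_one (ha : 1 < a) : AntitoneOn (DD a) (Ioi 1) := by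
  intro r hr r' hr' hle
  simp only [mem_Ioi] at hr hr'
  rw [DD, DD, if_pos hr.le, if_pos hr'.le]
  exact Dp_anti ha hr.le hle

lemma DD_pos (ha : 1 < a) {r : ℝ} (hr : 0 < r) : 0 < DD a r := by
  rw [DD]
  split_ifs
  · exact mul_pos (div_pos one_pos (fhat_pos ha _)) (apos ha)
  · exact mul_pos (div_pos one_pos (fhat_pos ha _)) (div_pos (apos ha) (by positivity))

end SLaux

open SLaux

/-- The super-logarithm `L` is continuous and strictly increasing on `(0,∞)` with
`L(1) = 0`, `L(r) → -∞` as `r → 0+` and `L(r) → ∞` as `r → ∞` (so `L` is a bijection of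
`(0,∞)` onto `ℝ`); `L` is differentiable on `(0,∞)`; `L` is concave on `[1,∞)`; and if
moreover `a ≥ 2`, then `L` is concave on all of `(0,∞)`. -/
theorem stmt5 (a : ℝ) (ha : 1 < a) :
    ContinuousOn (superLog a) (Set.Ioi 0) ∧
    StrictMonoOn (superLog a) (Set.Ioi 0) ∧
    superLog a 1 = 0 ∧
    Filter.Tendsto (superLog a) (nhdsWithin 0 (Set.Ioi 0)) Filter.atBot ∧
    Filter.Tendsto (superLog a) Filter.atTop Filter.atTop ∧
    Set.BijOn (superLog a) (Set.Ioi 0) Set.univ ∧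
    (∀ r : ℝ, 0 < r → DifferentiableAt ℝ (superLog a) r) ∧
    ConcaveOn ℝ (Set.Ici 1) (superLog a) ∧
    (2 ≤ a → ConcaveOn ℝ (Set.Ioi 0) (superLog a)) := by
  have hdiff : ∀ r : ℝ, 0 < r → DifferentiableAt ℝ (superLog a) r :=
    fun r hr => (sl_hasDeriv ha hr).differentiableAt
  have hcont : ContinuousOn (superLog a) (Ioi 0) :=
    fun r hr => ((hdiff r hr).continuousAt).continuousWithinAt
  have hderiv : ∀ r : ℝ, 0 < r → deriv (superLog a) r = DD a r :=
    fun r hr => (sl_hasDeriv ha hr).deriv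
  have hmono : StrictMonoOn (superLog a) (Ioi 0) := by
    apply strictMonoOn_of_deriv_pos (convex_Ioi 0) hcont
    intro x hx
    rw [interior_Ioi] at hx
    rw [hderiv x hx]
    exact DD_pos ha hx
  have htop : Tendsto (superLog a) atTop atTop := by
    have hev : (fun r => Phat a (a*r) - a) =ᶠ[atTop] superLog a :=
      (eventually_ge_atTop 1).mono (fun r hr => (sl_eq_H ha hr).symm)
    apply Tendsto.congr' hev
    have h1 : Tendsto (fun r : ℝ => a * r) atTop atTop :=
      Tendsto.const_mul_atTop (apos ha) tendsto_id
    have h2 := (phat_tendsto_atTop ha).comp h1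
    have h3 := tendsto_atTop_add_const_right atTop (-a) h2
    apply h3.congr
    intro x
    simp [Function.comp, sub_eq_add_neg]
  have hbot : Tendsto (superLog a) (𝓝[>] (0:ℝ)) atBot := by
    have hev : (fun r => -(Phat a (a*(1/r)) - a)) =ᶠ[𝓝[>] (0:ℝ)] superLog a := by
      have hm : Ioo (0:ℝ) 1 ∈ 𝓝[>] (0:ℝ) := Ioo_mem_nhdsGT_of_mem ⟨le_rfl, one_pos⟩
      exact Filter.eventuallyEq_of_mem hm (fun x hx => (sl_eq_G ha hx.1 hx.2).symm)
    apply Tendsto.congr' hev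
    have h1 : Tendsto (fun r : ℝ => a * (1/r)) (𝓝[>] (0:ℝ)) atTop := by
      simpa [one_div] using Tendsto.const_mul_atTop (apos ha) tendsto_inv_nhdsGT_zero
    have h2 := (phat_tendsto_atTop ha).comp h1
    have h3 := tendsto_atTop_add_const_right _ (-a) h2
    have h4 := tendsto_neg_atTop_atBot.comp h3
    apply h4.congr
    intro x
    simp [Function.comp, sub_eq_add_neg]
  have hbij : BijOn (superLog a) (Ioi 0) univ := by
    refine ⟨fun x _ => trivial, hmono.injOn, ?_⟩
    intro y _
    obtain ⟨r2, hr2⟩ := ((htop.eventually_gt_atTop y).and (eventually_ge_atTop 1)).exists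
    have h8 : ∃ r1, r1 ∈ Ioi (0:ℝ) ∧ superLog a r1 < y := by
      have h9 := (hbot.eventually_lt_atBot y).and self_mem_nhdsWithin
      obtain ⟨r1, h1, h2⟩ := h9.exists
      exact ⟨r1, h2, h1⟩
    obtain ⟨r1, hr1pos, hr1⟩ := h8
    rw [mem_Ioi] at hr1pos
    have hr2pos : (0:ℝ) < r2 := lt_of_lt_of_le one_pos hr2.2
    have hr12 : r1 ≤ r2 := by
      by_contra h
      push_neg at h
      have := hmono (mem_Ioi.2 hr2pos) (mem_Ioi.2 hr1pos) h
      linarith [hr2.1]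
    have hsub : Icc r1 r2 ⊆ Ioi 0 := fun x hx => lt_of_lt_of_le hr1pos hx.1
    have him := intermediate_value_Icc hr12 (hcont.mono hsub)
    have hy : y ∈ Icc (superLog a r1) (superLog a r2) := ⟨hr1.le, hr2.1.le⟩
    obtain ⟨x, hx, hxy⟩ := him hy
    exact ⟨x, hsub hx, hxy⟩
  have hconc1 : ConcaveOn ℝ (Ici 1) (superLog a) := by
    apply AntitoneOn.concaveOn_of_deriv (convex_Ici 1)
      (hcont.mono (fun x hx => mem_Ioi.2 (lt_of_lt_of_le one_pos hx)))
    · intro x hx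
      rw [interior_Ici] at hx
      exact (hdiff x (lt_trans one_pos hx)).differentiableWithinAt
    · rw [interior_Ici]
      intro x hx y hy hxy
      rw [hderiv x (lt_trans one_pos hx), hderiv y (lt_trans one_pos hy)]
      exact DD_anti_Ioi_one ha hx hy hxy
  have hconc2 : 2 ≤ a → ConcaveOn ℝ (Ioi 0) (superLog a) := by
    intro ha2
    apply AntitoneOn.concaveOn_of_deriv (convex_Ioi 0) hcont
    · intro x hx
      rw [interior_Ioi] at hx
      exact (hdiff x hx).differentiableWithinAt
    · rw [interior_Ioi]
      intro x hx y hy hxy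
      rw [hderiv x hx, hderiv y hy]
      exact DD_anti ha ha2 hx hy hxy
  exact ⟨hcont, hmono, sl_one ha, hbot, htop, hbij, hdiff, hconc1, hconc2⟩
end

section
/- For each n ∈ ℕ, lim_{r→0+} L(r)/log^n(1/r) = 0 and lim_{r→∞} L(r)/log^n(r) = 0. -/
open Real MeasureTheory Filter Topology Set

section Aux

variable {a : ℝ}

lemma iter_ge (ha : 1 < a) {u : ℝ} (hu : a ≤ u) (k : ℕ) : a ≤ (Fa a)^[k] u := by
  induction k with
  | zero => simpa using hu
  | succ k ih =>
    rw [Function.iterate_succ_apply']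
    have h1 : Real.log a ≤ Real.log ((Fa a)^[k] u) := Real.log_le_log (by linarith) ih
    simp only [Fa]; linarith

lemma iter_pos (ha : 1 < a) {u : ℝ} (hu : a ≤ u) (k : ℕ) : 0 < (Fa a)^[k] u :=
  lt_of_lt_of_le (by linarith) (iter_ge ha hu k)

lemma iter_sub (ha : 1 < a) {u : ℝ} (hu : a ≤ u) (k : ℕ) :
    (Fa a)^[k] u - a ≤ (u - a) / a ^ k := by
  have ha0 : (0:ℝ) < a := by linarith
  induction k with
  | zero => simp
  | succ k ih =>
    rw [Function.iterate_succ_apply']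
    set v := (Fa a)^[k] u with hv
    have hva : a ≤ v := iter_ge ha hu k
    have hv0 : 0 < v := by linarith
    have h1 : Real.log (v / a) ≤ v / a - 1 :=
      Real.log_le_sub_one_of_pos (div_pos hv0 ha0)
    have h2 : Real.log v - Real.log a = Real.log (v / a) :=
      (Real.log_div (ne_of_gt hv0) (ne_of_gt ha0)).symm
    have h3 : Fa a v - a = Real.log v - Real.log a := by simp only [Fa]; ring
    have h4 : v / a - 1 = (v - a) / a := by field_simp
    have h5 : (v - a) / a ≤ ((u - a) / a ^ k) / a := by gcongr
    calc Fa a v - a = Real.log (v / a) := by rw [h3, h2]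
      _ ≤ (v - a) / a := by linarith
      _ ≤ ((u - a) / a ^ k) / a := h5
      _ = (u - a) / a ^ (k + 1) := by rw [div_div, ← pow_succ]

lemma summable_logF (ha : 1 < a) {u : ℝ} (hu : a ≤ u) :
    Summable (fun k : ℕ => Real.log ((Fa a)^[k] u / a)) := by
  have ha0 : (0:ℝ) < a := by linarith
  have hlt : (1 : ℝ) / a < 1 := by rw [div_lt_one ha0]; linarith
  have hge : (0 : ℝ) ≤ 1 / a := by positivity
  have hgeo : Summable (fun k : ℕ => ((u - a) / a) * (1 / a) ^ k) :=
    (summable_geometric_of_lt_one hge hlt).mul_left _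
  refine Summable.of_nonneg_of_le
    (fun k => Real.log_nonneg ((one_le_div ha0).2 (iter_ge ha hu k)))
    (fun k => ?_) hgeo
  have hp := iter_pos ha hu k
  have h1 : Real.log ((Fa a)^[k] u / a) ≤ (Fa a)^[k] u / a - 1 :=
    Real.log_le_sub_one_of_pos (div_pos hp ha0)
  have h2 : ((Fa a)^[k] u - a) / a ≤ ((u - a) / a ^ k) / a := by
    gcongr; exact iter_sub ha hu k
  have h3 : ((u - a) / a ^ k) / a = ((u - a) / a) * (1 / a) ^ k := by
    rw [div_pow, one_pow]; ring
  have h4 : (Fa a)^[k] u / a - 1 = ((Fa a)^[k] u - a) / a := by field_simp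
  linarith

lemma tprodF_eq (ha : 1 < a) {u : ℝ} (hu : a ≤ u) :
    ∏' k : ℕ, ((Fa a)^[k] u / a)
      = Real.exp (∑' k : ℕ, Real.log ((Fa a)^[k] u / a)) := by
  have ha0 : (0:ℝ) < a := by linarith
  have hs := (summable_logF ha hu).hasSum
  have hp := hs.rexp
  have h : Real.exp ∘ (fun k : ℕ => Real.log ((Fa a)^[k] u / a))
      = fun k : ℕ => (Fa a)^[k] u / a := by
    funext k
    exact Real.exp_log (div_pos (iter_pos ha hu k) ha0)
  rw [h] at hp
  exact hp.tprod_eq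

lemma Ftilde_pos (ha : 1 < a) {u : ℝ} (hu : a ≤ u) : 0 < Ftilde a u := by
  have ha0 : (0:ℝ) < a := by linarith
  unfold Ftilde
  rw [tprodF_eq ha hu]
  positivity

lemma Ftilde_lb (ha : 1 < a) {u : ℝ} (hu : a ≤ u) (n : ℕ) :
    ∏ k ∈ Finset.range (n + 1), (Fa a)^[k] u ≤ a ^ n * Ftilde a u := by
  have ha0 : (0:ℝ) < a := by linarith
  have hsum : ∑ k ∈ Finset.range (n + 1), Real.log ((Fa a)^[k] u / a)
      ≤ ∑' k : ℕ, Real.log ((Fa a)^[k] u / a) :=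
    Summable.sum_le_tsum _ (fun k _ => Real.log_nonneg ((one_le_div ha0).2 (iter_ge ha hu k)))
      (summable_logF ha hu)
  have hexp := Real.exp_le_exp.2 hsum
  rw [Real.exp_sum] at hexp
  have heq : ∀ k ∈ Finset.range (n + 1),
      Real.exp (Real.log ((Fa a)^[k] u / a)) = (Fa a)^[k] u / a := fun k _ =>
    Real.exp_log (div_pos (iter_pos ha hu k) ha0)
  rw [Finset.prod_congr rfl heq] at hexp
  have h2 : ∏ k ∈ Finset.range (n + 1), ((Fa a)^[k] u / a)
      = (∏ k ∈ Finset.range (n + 1), (Fa a)^[k] u) / a ^ (n + 1) := by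
    rw [Finset.prod_div_distrib, Finset.prod_const, Finset.card_range]
  rw [h2] at hexp
  have h3 : (∏ k ∈ Finset.range (n + 1), (Fa a)^[k] u)
      ≤ a ^ (n + 1) * Real.exp (∑' k : ℕ, Real.log ((Fa a)^[k] u / a)) := by
    have hpow : (0:ℝ) < a ^ (n + 1) := by positivity
    have := (div_le_iff₀ hpow).1 hexp
    linarith
  unfold Ftilde
  rw [tprodF_eq ha hu]
  calc ∏ k ∈ Finset.range (n + 1), (Fa a)^[k] u
      ≤ a ^ (n + 1) * Real.exp (∑' k, Real.log ((Fa a)^[k] u / a)) := h3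
    _ = a ^ n * (a * Real.exp (∑' k, Real.log ((Fa a)^[k] u / a))) := by ring

lemma iter_fixed (ha : 1 < a) (m : ℕ) : (Fa a)^[m] a = a := by
  induction m with
  | zero => simp
  | succ m ih => rw [Function.iterate_succ_apply', ih]; simp [Fa]

lemma hasDerivAt_iter (ha : 1 < a) {t : ℝ} (ht : a ≤ t) (m : ℕ) :
    HasDerivAt ((Fa a)^[m]) (∏ k ∈ Finset.range m, ((Fa a)^[k] t)⁻¹) t := by
  induction m with
  | zero => simpa using hasDerivAt_id t
  | succ m ih =>
    have hp := iter_pos ha ht m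
    have hF : HasDerivAt (Fa a) (((Fa a)^[m] t)⁻¹) ((Fa a)^[m] t) := by
      exact (Real.hasDerivAt_log (ne_of_gt hp)).const_add (a - Real.log a)
    have hcomp := hF.comp t ih
    have hiter : (Fa a)^[m + 1] = Fa a ∘ (Fa a)^[m] := Function.iterate_succ' _ _
    rw [hiter]
    rw [Finset.prod_range_succ, mul_comm]
    exact hcomp

lemma L_le (ha : 1 < a) {r : ℝ} (hr : 1 ≤ r) (n : ℕ) :
    phiFun a (a * r) - a ≤ a ^ n * ((Fa a)^[n + 1] (a * r) - a) := by
  have ha0 : (0:ℝ) < a := by linarith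
  set b := a * r with hb
  have hab : a ≤ b := by nlinarith
  set g : ℝ → ℝ := fun t => a ^ n * ∏ k ∈ Finset.range (n + 1), ((Fa a)^[k] t)⁻¹ with hg
  have hgcont : ContinuousOn g (Icc a b) := by
    apply ContinuousOn.mul continuousOn_const
    apply continuousOn_finset_prod
    intro k _
    intro t ht
    exact (((hasDerivAt_iter ha ht.1 k).continuousAt).continuousWithinAt).inv₀
      (ne_of_gt (iter_pos ha ht.1 k))
  have hderiv : ∀ t ∈ uIcc a b, HasDerivAt (fun t => a ^ n * (Fa a)^[n + 1] t) (g t) t := by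
    intro t ht
    rw [uIcc_of_le hab] at ht
    exact (hasDerivAt_iter ha ht.1 (n + 1)).const_mul _
  have hgint : IntervalIntegrable g volume a b := by
    apply ContinuousOn.intervalIntegrable
    rwa [uIcc_of_le hab]
  have hkey : ∫ t in a..b, g t = a ^ n * ((Fa a)^[n + 1] b - a) := by
    rw [intervalIntegral.integral_eq_sub_of_hasDerivAt hderiv hgint, iter_fixed ha]
    ring
  have hle : ∀ t ∈ Icc a b, 1 / Ftilde a t ≤ g t := by
    intro t ht
    have h1 := Ftilde_lb ha ht.1 n
    have h2 : (0:ℝ) < ∏ k ∈ Finset.range (n + 1), (Fa a)^[k] t :=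
      Finset.prod_pos fun k _ => iter_pos ha ht.1 k
    have h3 : (0:ℝ) < Ftilde a t := Ftilde_pos ha ht.1
    show 1 / Ftilde a t ≤ a ^ n * ∏ k ∈ Finset.range (n + 1), ((Fa a)^[k] t)⁻¹
    rw [Finset.prod_inv_distrib, ← div_eq_mul_inv, div_le_div_iff₀ h3 h2, one_mul]
    nlinarith
  have hmono : ∫ t in a..b, 1 / Ftilde a t ≤ ∫ t in a..b, g t := by
    rw [intervalIntegral.integral_of_le hab, intervalIntegral.integral_of_le hab]
    apply MeasureTheory.integral_mono_of_nonneg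
    · refine (ae_restrict_iff' measurableSet_Ioc).2 (ae_of_all _ fun t ht => ?_)
      have := Ftilde_pos ha (le_of_lt ht.1)
      positivity
    · exact (hgcont.integrableOn_Icc).mono_set Ioc_subset_Icc_self
    · refine (ae_restrict_iff' measurableSet_Ioc).2 (ae_of_all _ fun t ht => ?_)
      exact hle t ⟨le_of_lt ht.1, ht.2⟩
  have hphi : phiFun a b - a = ∫ t in a..b, 1 / Ftilde a t := by simp [phiFun]
  rw [hphi, ← hkey]
  exact hmono

lemma L_nonneg (ha : 1 < a) {r : ℝ} (hr : 1 ≤ r) : 0 ≤ phiFun a (a * r) - a := by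
  have ha0 : (0:ℝ) < a := by linarith
  have hab : a ≤ a * r := by nlinarith
  have hphi : phiFun a (a * r) - a = ∫ t in a..(a * r), 1 / Ftilde a t := by simp [phiFun]
  rw [hphi]
  apply intervalIntegral.integral_nonneg hab
  intro t ht
  have := Ftilde_pos ha ht.1
  positivity

lemma tendsto_logIter (n : ℕ) : Tendsto (Real.log^[n]) atTop atTop := by
  induction n with
  | zero => simpa using tendsto_id (α := ℝ)
  | succ n ih =>
    rw [Function.iterate_succ']
    exact Real.tendsto_log_atTop.comp ih

lemma F_le_logIter (ha : 1 < a) (m : ℕ) :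
    ∀ᶠ u in atTop, (Fa a)^[m] u ≤ Real.log^[m] u + a := by
  have ha0 : (0:ℝ) < a := by linarith
  induction m with
  | zero =>
    filter_upwards with u
    simp only [Function.iterate_zero, id]
    linarith
  | succ m ih =>
    have h1 : ∀ᶠ u in atTop, a / (a - 1) ≤ Real.log^[m] u :=
      (tendsto_logIter m).eventually_ge_atTop _
    have h2 : ∀ᶠ u in atTop, (1:ℝ) ≤ Real.log^[m] u :=
      (tendsto_logIter m).eventually_ge_atTop _
    filter_upwards [ih, h1, h2, eventually_ge_atTop a] with u hih hm h1m hua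
    rw [Function.iterate_succ_apply', Function.iterate_succ_apply']
    have hp : 0 < (Fa a)^[m] u := iter_pos ha hua m
    have hlm : 0 < Real.log^[m] u := by linarith
    have hkey : a ≤ (a - 1) * Real.log^[m] u := by
      rw [div_le_iff₀ (by linarith)] at hm
      linarith
    have step1 : Real.log ((Fa a)^[m] u) ≤ Real.log (Real.log^[m] u + a) :=
      Real.log_le_log hp (by linarith)
    have step2 : Real.log (Real.log^[m] u + a) ≤ Real.log (a * Real.log^[m] u) := by
      apply Real.log_le_log (by linarith)
      nlinarith
    have step3 : Real.log (a * Real.log^[m] u) = Real.log a + Real.log (Real.log^[m] u) :=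
      Real.log_mul (by positivity) (by positivity)
    simp only [Fa]
    linarith

lemma myOneAddDiv (x y : ℝ) (hy : y ≠ 0) : 1 + x / y = (x + y) / y := by
  field_simp; ring

lemma myDivMulDiv (N B C : ℝ) (hB : B ≠ 0) : N / B * (B / C) = N / C := by
  field_simp

lemma ratio_one (ha : 1 < a) (k : ℕ) :
    Tendsto (fun r : ℝ => Real.log^[k + 1] (a * r) / Real.log^[k + 1] r) atTop (𝓝 1) := by
  have ha0 : (0:ℝ) < a := by linarith
  induction k with
  | zero =>
    have h : Tendsto (fun r : ℝ => Real.log a / Real.log r) atTop (𝓝 0) :=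
      tendsto_const_nhds.div_atTop Real.tendsto_log_atTop
    have h2 := h.const_add 1
    rw [add_zero] at h2
    apply h2.congr'
    filter_upwards [eventually_gt_atTop (1:ℝ)] with r hr
    have hlr : 0 < Real.log r := Real.log_pos hr
    show 1 + Real.log a / Real.log r = Real.log (a * r) / Real.log r
    rw [Real.log_mul (by positivity) (by positivity)]
    field_simp
    ring
  | succ k ih =>
    set q : ℝ → ℝ := fun r => Real.log^[k + 1] (a * r) / Real.log^[k + 1] r with hq
    have hq1 : Tendsto q atTop (𝓝 1) := ih
    have hlogq : Tendsto (fun r => Real.log (q r)) atTop (𝓝 0) := by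
      have := (Real.continuousAt_log (by norm_num : (1:ℝ) ≠ 0)).tendsto.comp hq1
      rw [Real.log_one] at this
      exact this
    have hdiv : Tendsto (fun r => Real.log (q r) / Real.log^[k + 2] r) atTop (𝓝 0) :=
      hlogq.div_atTop (tendsto_logIter (k + 2))
    have h2 := hdiv.const_add 1
    rw [add_zero] at h2
    apply h2.congr'
    have hev1 : ∀ᶠ r in atTop, (0:ℝ) < Real.log^[k + 1] r :=
      (tendsto_logIter (k + 1)).eventually_gt_atTop 0
    have hev2 : ∀ᶠ r in atTop, (1/2 : ℝ) < q r :=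
      hq1 (Ioi_mem_nhds (by norm_num))
    have hev3 : ∀ᶠ r in atTop, (0:ℝ) < Real.log^[k + 2] r :=
      (tendsto_logIter (k + 2)).eventually_gt_atTop 0
    filter_upwards [hev1, hev2, hev3] with r h1 h2' h3
    have hqpos : 0 < q r := by linarith
    have hmul : Real.log^[k + 1] (a * r) = q r * Real.log^[k + 1] r :=
      (div_mul_cancel₀ _ (ne_of_gt h1)).symm
    have hsplit : Real.log^[k + 2] (a * r) = Real.log (q r) + Real.log^[k + 2] r := by
      have e1 : Real.log^[k + 2] (a * r) = Real.log (Real.log^[k + 1] (a * r)) := by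
        rw [show k + 2 = (k + 1) + 1 from rfl, Function.iterate_succ_apply']
      have e2 : Real.log^[k + 2] r = Real.log (Real.log^[k + 1] r) := by
        rw [show k + 2 = (k + 1) + 1 from rfl, Function.iterate_succ_apply']
      rw [e1, e2, hmul, Real.log_mul (ne_of_gt hqpos) (ne_of_gt h1)]
    rw [hsplit]
    exact (myOneAddDiv (Real.log (q r)) _ (ne_of_gt h3))

lemma ratio_zero (n : ℕ) :
    Tendsto (fun r : ℝ => Real.log^[n + 1] r / Real.log^[n] r) atTop (𝓝 0) := by
  have h : Tendsto (fun x : ℝ => Real.log x / x) atTop (𝓝 0) :=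
    Real.isLittleO_log_id_atTop.tendsto_div_nhds_zero
  have hc := h.comp (tendsto_logIter n)
  apply hc.congr
  intro r
  simp [Function.iterate_succ_apply']

lemma K_lemma (ha : 1 < a) (n : ℕ) :
    Tendsto (fun r : ℝ => Real.log^[n + 1] (a * r) / Real.log^[n] r) atTop (𝓝 0) := by
  have h1 := ratio_one ha n
  have h2 := ratio_zero n
  have hm := h1.mul h2
  rw [one_mul] at hm
  apply hm.congr'
  filter_upwards [(tendsto_logIter (n + 1)).eventually_gt_atTop (0:ℝ)] with r hr
  exact myDivMulDiv _ _ _ (ne_of_gt hr)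

end Aux

/-- For each `n ∈ ℕ`, `lim_{r→0+} L(r)/log^n(1/r) = 0` and `lim_{r→∞} L(r)/log^n(r) = 0`,
where `log^n` is the `n`-fold iterated logarithm. -/
theorem stmt6 (a : ℝ) (ha : 1 < a) (n : ℕ) :
    Filter.Tendsto (fun r : ℝ => superLog a r / Real.log^[n] (1 / r))
      (nhdsWithin 0 (Set.Ioi 0)) (nhds 0) ∧
    Filter.Tendsto (fun r : ℝ => superLog a r / Real.log^[n] r) Filter.atTop (nhds 0) := by
  have ha0 : (0:ℝ) < a := by linarith
  have h2 : Tendsto (fun r : ℝ => superLog a r / Real.log^[n] r) atTop (𝓝 0) := by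
    have hB : Tendsto (fun r : ℝ => a ^ n * (Real.log^[n + 1] (a * r) / Real.log^[n] r))
        atTop (𝓝 0) := by
      have := (K_lemma ha n).const_mul (a ^ n)
      simpa using this
    have har : Tendsto (fun r : ℝ => a * r) atTop atTop :=
      Tendsto.const_mul_atTop ha0 tendsto_id
    have hF : ∀ᶠ r : ℝ in atTop,
        (Fa a)^[n + 1] (a * r) ≤ Real.log^[n + 1] (a * r) + a :=
      har.eventually (F_le_logIter ha (n + 1))
    apply tendsto_of_tendsto_of_tendsto_of_le_of_le' tendsto_const_nhds hB
    · filter_upwards [eventually_ge_atTop (1:ℝ),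
        (tendsto_logIter n).eventually_gt_atTop (0:ℝ)] with r hr hlog
      rw [superLog, if_pos hr]
      exact div_nonneg (L_nonneg ha hr) (le_of_lt hlog)
    · filter_upwards [eventually_ge_atTop (1:ℝ),
        (tendsto_logIter n).eventually_gt_atTop (0:ℝ), hF] with r hr hlog hFr
      rw [superLog, if_pos hr]
      have hL := L_le ha hr n
      have hchain : phiFun a (a * r) - a ≤ a ^ n * Real.log^[n + 1] (a * r) := by
        have hsub : (Fa a)^[n + 1] (a * r) - a ≤ Real.log^[n + 1] (a * r) := by linarith
        nlinarith [pow_pos ha0 n]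
      calc (phiFun a (a * r) - a) / Real.log^[n] r
          ≤ (a ^ n * Real.log^[n + 1] (a * r)) / Real.log^[n] r := by gcongr
        _ = a ^ n * (Real.log^[n + 1] (a * r) / Real.log^[n] r) := by rw [mul_div_assoc]
  refine ⟨?_, h2⟩
  have hinv : Tendsto (fun r : ℝ => 1 / r) (𝓝[>] (0:ℝ)) atTop := by
    simpa [one_div] using tendsto_inv_nhdsGT_zero (𝕜 := ℝ)
  have hcomp := (h2.neg).comp hinv
  rw [neg_zero] at hcomp
  apply hcomp.congr'
  filter_upwards [Ioo_mem_nhdsGT_of_mem (Set.mem_Ico.2 ⟨le_refl (0:ℝ), zero_lt_one⟩)]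
    with r hr
  have hr0 : 0 < r := hr.1
  have hr1 : r < 1 := hr.2
  have hinv1 : 1 ≤ 1 / r := by rw [le_div_iff₀ hr0]; linarith
  simp only [Function.comp]
  rw [superLog, superLog, if_pos hinv1, if_neg (not_le.2 hr1), neg_div]
end

section
/- Let g be admissible and let u : ℝ^n → ℝ be Lebesgue measurable with μ_g[u](t) < ∞ for every t > 0. Then the rearrangement R_g[u] is equimeasurable with u: μ_g[u](t) = μ_g[R_g[u]](t) for every t ≥ 0. -/
open Real MeasureTheory Filter Topology Set

/-- The measure determined by `g`: `μ_g(A) = ∫_A g(x) dx`. -/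
noncomputable def muG (n : ℕ) (g : EuclideanSpace ℝ (Fin n) → ℝ)
    (A : Set (EuclideanSpace ℝ (Fin n))) : ENNReal :=
  ∫⁻ x in A, ENNReal.ofReal (g x)

/-- The distribution function of `u` with respect to `g`:
`μ_g[u](t) = μ_g({x : |u(x)| > t})`. -/
noncomputable def distG (n : ℕ) (g u : EuclideanSpace ℝ (Fin n) → ℝ) (t : ℝ) : ENNReal :=
  muG n g {x | t < |u x|}

/-- The rearrangement of `u` with respect to `g`:
`R_g[u](x) = sup {t ≥ 0 : μ_g[u](t) > μ_g(B_{|x|})}`. -/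
noncomputable def rearrG (n : ℕ) (g u : EuclideanSpace ℝ (Fin n) → ℝ)
    (x : EuclideanSpace ℝ (Fin n)) : ℝ :=
  sSup {t : ℝ | 0 ≤ t ∧ muG n g (Metric.ball 0 ‖x‖) < distG n g u t}

/-- `g` is admissible: locally integrable, radial, continuous away from the origin,
nonnegative, and nonincreasing in `|x|`. -/
def Admissible (n : ℕ) (g : EuclideanSpace ℝ (Fin n) → ℝ) : Prop :=
  MeasureTheory.LocallyIntegrable g MeasureTheory.volume ∧
  (∀ x y : EuclideanSpace ℝ (Fin n), ‖x‖ = ‖y‖ → g x = g y) ∧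
  ContinuousOn g {x : EuclideanSpace ℝ (Fin n) | x ≠ 0} ∧
  (∀ x : EuclideanSpace ℝ (Fin n), x ≠ 0 → 0 ≤ g x) ∧
  (∀ x y : EuclideanSpace ℝ (Fin n), x ≠ 0 → y ≠ 0 → ‖x‖ ≤ ‖y‖ → g y ≤ g x)

section Aux
variable {n : ℕ} {g u : EuclideanSpace ℝ (Fin n) → ℝ}

lemma muG_mono {A B : Set (EuclideanSpace ℝ (Fin n))} (h : A ⊆ B) :
    muG n g A ≤ muG n g B := lintegral_mono_set h

lemma muG_empty : muG n g ∅ = 0 := by simp [muG]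

lemma distG_anti {s t : ℝ} (h : s ≤ t) : distG n g u t ≤ distG n g u s :=
  muG_mono fun x hx => lt_of_le_of_lt h hx

lemma rearrG_nonneg (x : EuclideanSpace ℝ (Fin n)) : 0 ≤ rearrG n g u x :=
  Real.sSup_nonneg fun _ hs => hs.1

lemma dir2 {t : ℝ} (ht : 0 ≤ t) {x : EuclideanSpace ℝ (Fin n)}
    (hx : t < rearrG n g u x) :
    muG n g (Metric.ball 0 ‖x‖) < distG n g u t := by
  set S := {s : ℝ | 0 ≤ s ∧ muG n g (Metric.ball 0 ‖x‖) < distG n g u s} with hS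
  have hx' : t < sSup S := hx
  have hne : S.Nonempty := by
    by_contra h
    rw [not_nonempty_iff_eq_empty] at h
    rw [h, Real.sSup_empty] at hx'
    exact absurd hx' (not_lt.2 ht)
  have hbdd : BddAbove S := by
    by_contra h
    rw [Real.sSup_of_not_bddAbove h] at hx'
    exact absurd hx' (not_lt.2 ht)
  obtain ⟨s, hsS, hts⟩ := exists_lt_of_lt_csSup hne hx'
  exact lt_of_lt_of_le hsS.2 (distG_anti hts.le)

lemma measSet_abs (hu : Measurable u) (s : ℝ) :
    MeasurableSet {x : EuclideanSpace ℝ (Fin n) | s < |u x|} :=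
  measurableSet_lt measurable_const hu.abs

lemma muG_eq {A : Set (EuclideanSpace ℝ (Fin n))} (hA : MeasurableSet A) :
    muG n g A = (volume.withDensity fun x => ENNReal.ofReal (g x)) A :=
  (withDensity_apply _ hA).symm

lemma distG_iSup (hu : Measurable u) (t : ℝ) :
    distG n g u t = ⨆ k : ℕ, distG n g u (t + 1/((k:ℝ)+1)) := by
  have hset : {x : EuclideanSpace ℝ (Fin n) | t < |u x|} =
      ⋃ k : ℕ, {x : EuclideanSpace ℝ (Fin n) | t + 1/((k:ℝ)+1) < |u x|} := by
    ext x
    simp only [mem_setOf_eq, mem_iUnion]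
    constructor
    · intro h
      obtain ⟨k, hk⟩ := exists_nat_one_div_lt (sub_pos.2 h)
      exact ⟨k, by linarith⟩
    · rintro ⟨k, hk⟩
      have : (0:ℝ) < 1/((k:ℝ)+1) := by positivity
      linarith
  have hmono : Monotone fun k : ℕ =>
      {x : EuclideanSpace ℝ (Fin n) | t + 1/((k:ℝ)+1) < |u x|} := by
    intro k k' hkk' x hx
    simp only [mem_setOf_eq] at hx ⊢
    have h1 : 1/((k':ℝ)+1) ≤ 1/((k:ℝ)+1) := by
      apply one_div_le_one_div_of_le (by positivity)
      have : (k:ℝ) ≤ (k':ℝ) := by exact_mod_cast hkk'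
      linarith
    linarith
  rw [distG, muG_eq (by rw [hset]; exact MeasurableSet.iUnion fun k => measSet_abs hu _),
      hset, hmono.measure_iUnion]
  exact iSup_congr fun k => by rw [distG, muG_eq (measSet_abs hu _)]

lemma distG_tendsto (hu : Measurable u) (hfin1 : distG n g u 1 < ⊤) :
    Tendsto (fun k : ℕ => distG n g u (k:ℝ)) atTop (𝓝 0) := by
  set M := volume.withDensity fun x : EuclideanSpace ℝ (Fin n) => ENNReal.ofReal (g x) with hM
  have hA : ∀ k : ℕ, MeasurableSet {x : EuclideanSpace ℝ (Fin n) | (k:ℝ) < |u x|} :=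
    fun _ => measSet_abs hu _
  have hanti : Antitone fun k : ℕ => {x : EuclideanSpace ℝ (Fin n) | (k:ℝ) < |u x|} := by
    intro k k' h x hx
    simp only [mem_setOf_eq] at hx ⊢
    have : (k:ℝ) ≤ (k':ℝ) := by exact_mod_cast h
    linarith
  have hint : (⋂ k : ℕ, {x : EuclideanSpace ℝ (Fin n) | (k:ℝ) < |u x|}) = ∅ := by
    ext x
    simp only [mem_iInter, mem_setOf_eq, mem_empty_iff_false, iff_false, not_forall, not_lt]
    obtain ⟨k, hk⟩ := exists_nat_gt |u x|
    exact ⟨k, hk.le⟩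
  have hfin' : M {x : EuclideanSpace ℝ (Fin n) | ((1:ℕ):ℝ) < |u x|} ≠ ⊤ := by
    rw [← muG_eq (hA 1)]
    have : distG n g u ((1:ℕ):ℝ) < ⊤ := by rwa [Nat.cast_one]
    exact this.ne
  have h := tendsto_measure_iInter_atTop (μ := M)
    (fun k => (hA k).nullMeasurableSet) hanti ⟨1, hfin'⟩
  rw [hint, measure_empty] at h
  refine h.congr fun k => ?_
  simp only [Function.comp_apply]
  rw [distG, muG_eq (hA k)]

lemma dir1 (hu : Measurable u) (hfin1 : distG n g u 1 < ⊤)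
    {x : EuclideanSpace ℝ (Fin n)} (hm0 : muG n g (Metric.ball 0 ‖x‖) ≠ 0)
    {t : ℝ} (ht : 0 ≤ t) (hlt : muG n g (Metric.ball 0 ‖x‖) < distG n g u t) :
    t < rearrG n g u x := by
  set m := muG n g (Metric.ball (0 : EuclideanSpace ℝ (Fin n)) ‖x‖) with hm
  set S := {s : ℝ | 0 ≤ s ∧ m < distG n g u s} with hS
  obtain ⟨k0, hk0⟩ : ∃ k : ℕ, distG n g u (k:ℝ) < m :=
    ((distG_tendsto hu hfin1).eventually (gt_mem_nhds (pos_iff_ne_zero.2 hm0))).exists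
  have hbdd : BddAbove S := by
    refine ⟨k0, fun s hs => ?_⟩
    by_contra hc
    push_neg at hc
    exact absurd (lt_of_lt_of_le hs.2 (distG_anti hc.le)) (not_lt.2 hk0.le)
  obtain ⟨k, hk⟩ : ∃ k : ℕ, m < distG n g u (t + 1/((k:ℝ)+1)) := by
    have h := hlt
    rw [distG_iSup hu t, lt_iSup_iff] at h
    exact h
  have hpos : (0:ℝ) < 1/((k:ℝ)+1) := by positivity
  have hmem : (t + 1/((k:ℝ)+1)) ∈ S := ⟨by linarith, hk⟩
  calc t < t + 1/((k:ℝ)+1) := by linarith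
    _ ≤ sSup S := le_csSup hbdd hmem
    _ = rearrG n g u x := rfl

lemma volume_singleton_zero [Nontrivial (EuclideanSpace ℝ (Fin n))] :
    volume ({0} : Set (EuclideanSpace ℝ (Fin n))) = 0 := by
  rw [← Metric.sphere_zero]
  exact Measure.addHaar_sphere volume 0 0

lemma muG_univ_zero [Nontrivial (EuclideanSpace ℝ (Fin n))] (hg : Admissible n g)
    {r : ℝ} (hr : 0 < r) (h0 : muG n g (Metric.ball 0 r) = 0) :
    muG n g (univ : Set (EuclideanSpace ℝ (Fin n))) = 0 := by
  obtain ⟨hloc, -, -, -, hmono⟩ := hg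
  have hgm : AEMeasurable (fun x => ENNReal.ofReal (g x))
      (volume.restrict (Metric.ball (0 : EuclideanSpace ℝ (Fin n)) r)) :=
    (hloc.aestronglyMeasurable.aemeasurable.restrict).ennreal_ofReal
  have hae : ∀ᵐ x ∂(volume.restrict (Metric.ball (0 : EuclideanSpace ℝ (Fin n)) r)),
      ENNReal.ofReal (g x) = 0 := by
    have h := (lintegral_eq_zero_iff' hgm).1 h0
    filter_upwards [h] with x hx using hx
  have hmem : ∀ᵐ x ∂(volume.restrict (Metric.ball (0 : EuclideanSpace ℝ (Fin n)) r)),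
      x ∈ Metric.ball (0 : EuclideanSpace ℝ (Fin n)) r :=
    ae_restrict_mem measurableSet_ball
  have hne : ∀ᵐ x ∂(volume.restrict (Metric.ball (0 : EuclideanSpace ℝ (Fin n)) r)),
      x ≠ 0 := by
    refine ae_restrict_of_ae ?_
    rw [ae_iff]
    refine measure_mono_null (fun x hx => ?_) volume_singleton_zero
    simp only [mem_setOf_eq, not_not] at hx
    simp [hx]
  haveI : NeBot (ae (volume.restrict (Metric.ball (0 : EuclideanSpace ℝ (Fin n)) r))) := by
    rw [ae_neBot, Ne, Measure.restrict_eq_zero]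
    exact (Metric.measure_ball_pos volume 0 hr).ne'
  obtain ⟨x0, hx0g, hx0b, hx0ne⟩ := (hae.and (hmem.and hne)).exists
  have hx0norm : 0 < ‖x0‖ := norm_pos_iff.2 hx0ne
  have hkey : ∀ y : EuclideanSpace ℝ (Fin n), ‖x0‖ ≤ ‖y‖ → ENNReal.ofReal (g y) = 0 := by
    intro y hy
    have hyne : y ≠ 0 := by
      intro h
      rw [h, norm_zero] at hy
      exact absurd hy (not_le.2 hx0norm)
    have h1 : g y ≤ g x0 := hmono x0 y hx0ne hyne hy
    have h2 : g x0 ≤ 0 := ENNReal.ofReal_eq_zero.1 hx0g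
    exact ENNReal.ofReal_eq_zero.2 (h1.trans h2)
  have hcover : (univ : Set (EuclideanSpace ℝ (Fin n))) ⊆
      Metric.ball 0 r ∪ {y : EuclideanSpace ℝ (Fin n) | ‖x0‖ ≤ ‖y‖} := by
    intro y _
    rcases lt_or_ge ‖y‖ r with h | h
    · left
      exact Metric.mem_ball.2 (by rwa [dist_zero_right])
    · right
      have : ‖x0‖ < r := by rwa [Metric.mem_ball, dist_zero_right] at hx0b
      exact le_trans this.le h
  have h2 : muG n g {y : EuclideanSpace ℝ (Fin n) | ‖x0‖ ≤ ‖y‖} = 0 := by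
    have hmeas : MeasurableSet {y : EuclideanSpace ℝ (Fin n) | ‖x0‖ ≤ ‖y‖} :=
      measurableSet_le measurable_const continuous_norm.measurable
    rw [muG, setLIntegral_congr_fun hmeas (fun y hy => hkey y hy)]
    simp
  refine le_antisymm ?_ zero_le
  calc muG n g univ ≤ muG n g (Metric.ball 0 r ∪ {y | ‖x0‖ ≤ ‖y‖}) := muG_mono hcover
    _ ≤ muG n g (Metric.ball 0 r) + muG n g {y | ‖x0‖ ≤ ‖y‖} := lintegral_union_le _ _ _
    _ = 0 := by rw [h0, h2, add_zero]

lemma muG_ball_fin (hg : Admissible n g) (r : ℝ) :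
    muG n g (Metric.ball 0 r) ≠ ⊤ := by
  have hint : IntegrableOn g (Metric.closedBall (0 : EuclideanSpace ℝ (Fin n)) r) volume :=
    hg.1.integrableOn_isCompact (isCompact_closedBall 0 r)
  have hle : muG n g (Metric.ball 0 r) ≤
      ∫⁻ x in Metric.closedBall (0 : EuclideanSpace ℝ (Fin n)) r, (‖g x‖₊ : ENNReal) := by
    refine le_trans (muG_mono Metric.ball_subset_closedBall) (lintegral_mono fun x => ?_)
    exact Real.ofReal_le_enorm _
  exact (hle.trans_lt hint.2).ne

end Aux

/-- If `g` is admissible and `u` is measurable with finite distribution function for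
every `t > 0`, then `R_g[u]` is equimeasurable with `u`:
`μ_g[u](t) = μ_g[R_g[u]](t)` for every `t ≥ 0`. -/


theorem stmt9 (n : ℕ) (g u : EuclideanSpace ℝ (Fin n) → ℝ)
    (hg : Admissible n g) (hu : Measurable u)
    (hfin : ∀ t : ℝ, 0 < t → distG n g u t < ⊤) :
    ∀ t : ℝ, 0 ≤ t → distG n g u t = distG n g (rearrG n g u) t := by
  intro t ht
  by_cases hα : distG n g u t = 0
  · rw [hα]
    have hempty : {x : EuclideanSpace ℝ (Fin n) | t < |rearrG n g u x|} = ∅ := by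
      ext x
      simp only [mem_setOf_eq, mem_empty_iff_false, iff_false, not_lt]
      by_contra hc
      push_neg at hc
      have h' : t < rearrG n g u x := by
        rwa [abs_of_nonneg (rearrG_nonneg x)] at hc
      have h2 := dir2 ht h'
      rw [hα] at h2
      exact absurd h2 (not_lt.2 zero_le)
    rw [distG, hempty, muG_empty]
  · have hαpos : 0 < distG n g u t := pos_iff_ne_zero.2 hα
    rcases Nat.eq_zero_or_pos n with hn | hn
    · -- n = 0 : the space is a subsingleton
      subst hn
      haveI : Subsingleton (EuclideanSpace ℝ (Fin 0)) :=
        ⟨fun a b => by ext i; exact i.elim0⟩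
      have hAne : {x : EuclideanSpace ℝ (Fin 0) | t < |u x|}.Nonempty := by
        rw [nonempty_iff_ne_empty]
        intro h
        rw [distG, h, muG_empty] at hα
        exact hα rfl
      obtain ⟨x0, hx0⟩ := hAne
      have hx0' : t < |u x0| := hx0
      have hall : ∀ y : EuclideanSpace ℝ (Fin 0), u y = u x0 := fun y => by
        rw [Subsingleton.elim y x0]
      have hAuniv : {x : EuclideanSpace ℝ (Fin 0) | t < |u x|} = univ :=
        eq_univ_of_forall fun y => by
          simp only [mem_setOf_eq, hall y]; exact hx0'
      have hαuniv : distG 0 g u t = muG 0 g univ := by rw [distG, hAuniv]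
      have hrearr : ∀ y : EuclideanSpace ℝ (Fin 0), t < rearrG 0 g u y := by
        intro y
        have hy0 : ‖y‖ = (0:ℝ) := by
          rw [Subsingleton.elim y (0 : EuclideanSpace ℝ (Fin 0)), norm_zero]
        have hball : muG 0 g (Metric.ball (0 : EuclideanSpace ℝ (Fin 0)) ‖y‖) = 0 := by
          rw [hy0, Metric.ball_zero, muG_empty]
        set S := {s : ℝ | 0 ≤ s ∧
          muG 0 g (Metric.ball (0 : EuclideanSpace ℝ (Fin 0)) ‖y‖) < distG 0 g u s} with hS
        set s0 := (t + |u x0|)/2 with hs0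
        have hts0 : t < s0 := by rw [hs0]; linarith
        have hs0c : s0 < |u x0| := by rw [hs0]; linarith
        have hS0 : s0 ∈ S := by
          refine ⟨by linarith, ?_⟩
          rw [hball]
          have hset : {x : EuclideanSpace ℝ (Fin 0) | s0 < |u x|} = univ :=
            eq_univ_of_forall fun z => by
              simp only [mem_setOf_eq, hall z]; exact hs0c
          rw [distG, hset, ← hAuniv]
          exact hαpos
        have hbdd : BddAbove S := by
          refine ⟨|u x0|, fun s hs => ?_⟩
          by_contra hc
          push_neg at hc
          have hempty : {x : EuclideanSpace ℝ (Fin 0) | s < |u x|} = ∅ := by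
            ext z
            simp only [mem_setOf_eq, mem_empty_iff_false, iff_false, not_lt, hall z]
            exact hc.le
          have := hs.2
          rw [distG, hempty, muG_empty] at this
          exact absurd this (not_lt.2 zero_le)
        exact lt_of_lt_of_le hts0 (le_csSup hbdd hS0)
      have hRuniv : {x : EuclideanSpace ℝ (Fin 0) | t < |rearrG 0 g u x|} = univ :=
        eq_univ_of_forall fun y =>
          lt_of_lt_of_le (hrearr y) (le_abs_self _)
      rw [hαuniv, distG, hRuniv]
    · -- n ≥ 1
      haveI : Nontrivial (EuclideanSpace ℝ (Fin n)) := by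
        haveI : Nonempty (Fin n) := ⟨⟨0, hn⟩⟩
        infer_instance
      set M := volume.withDensity
        (fun x : EuclideanSpace ℝ (Fin n) => ENNReal.ofReal (g x)) with hMdef
      have hfin1 := hfin 1 one_pos
      have hpos : ∀ r : ℝ, 0 < r → muG n g (Metric.ball 0 r) ≠ 0 := by
        intro r hr h0
        have huniv := muG_univ_zero hg hr h0
        exact hα (le_antisymm ((muG_mono (subset_univ _)).trans huniv.le) zero_le)
      have hm'mono : ∀ {r r' : ℝ}, r ≤ r' →
          muG n g (Metric.ball (0 : EuclideanSpace ℝ (Fin n)) r) ≤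
          muG n g (Metric.ball 0 r') :=
        fun h => muG_mono (Metric.ball_subset_ball h)
      set T := {r : ℝ | 0 ≤ r ∧ muG n g (Metric.ball 0 r) < distG n g u t} with hTdef
      have h0T : (0:ℝ) ∈ T := by
        refine ⟨le_refl 0, ?_⟩
        rw [Metric.ball_zero, muG_empty]
        exact hαpos
      have hdir2' : ∀ x : EuclideanSpace ℝ (Fin n),
          x ∈ {x : EuclideanSpace ℝ (Fin n) | t < |rearrG n g u x|} →
          muG n g (Metric.ball 0 ‖x‖) < distG n g u t := by
        intro x hx
        exact dir2 ht (by rwa [mem_setOf_eq, abs_of_nonneg (rearrG_nonneg x)] at hx)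
      have hdir1' : ∀ x : EuclideanSpace ℝ (Fin n), x ≠ 0 →
          muG n g (Metric.ball 0 ‖x‖) < distG n g u t →
          x ∈ {x : EuclideanSpace ℝ (Fin n) | t < |rearrG n g u x|} := by
        intro x hx0 hlt
        have h := dir1 hu hfin1 (hpos ‖x‖ (norm_pos_iff.2 hx0)) ht hlt
        exact lt_of_lt_of_le h (le_abs_self _)
      by_cases hbddT : BddAbove T
      · -- bounded case
        set R := sSup T with hR
        have hR0 : 0 ≤ R := le_csSup hbddT h0T
        have hball_lt : ∀ r : ℝ, r < R → muG n g (Metric.ball 0 r) < distG n g u t := by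
          intro r hr
          obtain ⟨r', hr'T, hrr'⟩ := exists_lt_of_lt_csSup ⟨0, h0T⟩ hr
          exact lt_of_le_of_lt (hm'mono hrr'.le) hr'T.2
        have hout : ∀ r : ℝ, R < r → distG n g u t ≤ muG n g (Metric.ball 0 r) := by
          intro r hr
          by_contra hc
          push_neg at hc
          have : r ∈ T := ⟨hR0.trans hr.le, hc⟩
          exact absurd (le_csSup hbddT this) (not_le.2 hr)
        have hMball : M (Metric.ball (0 : EuclideanSpace ℝ (Fin n)) R) ≤ distG n g u t := by
          have hun : Metric.ball (0 : EuclideanSpace ℝ (Fin n)) R =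
              ⋃ k : ℕ, Metric.ball (0 : EuclideanSpace ℝ (Fin n)) (R - 1/((k:ℝ)+1)) := by
            ext x
            simp only [Metric.mem_ball, mem_iUnion, dist_zero_right]
            constructor
            · intro h
              obtain ⟨k, hk⟩ := exists_nat_one_div_lt (sub_pos.2 h)
              exact ⟨k, by linarith⟩
            · rintro ⟨k, hk⟩
              have : (0:ℝ) < 1/((k:ℝ)+1) := by positivity
              linarith
          have hmono : Monotone fun k : ℕ =>
              Metric.ball (0 : EuclideanSpace ℝ (Fin n)) (R - 1/((k:ℝ)+1)) := by
            intro k k' hkk'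
            refine Metric.ball_subset_ball ?_
            have h1 : 1/((k':ℝ)+1) ≤ 1/((k:ℝ)+1) := by
              apply one_div_le_one_div_of_le (by positivity)
              have : (k:ℝ) ≤ (k':ℝ) := by exact_mod_cast hkk'
              linarith
            linarith
          rw [hun, hmono.measure_iUnion]
          refine iSup_le fun k => ?_
          rw [← muG_eq measurableSet_ball]
          refine (hball_lt _ ?_).le
          have : (0:ℝ) < 1/((k:ℝ)+1) := by positivity
          linarith
        have hMcball : distG n g u t ≤
            M (Metric.closedBall (0 : EuclideanSpace ℝ (Fin n)) R) := by
          have hin : Metric.closedBall (0 : EuclideanSpace ℝ (Fin n)) R =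
              ⋂ k : ℕ, Metric.ball (0 : EuclideanSpace ℝ (Fin n)) (R + 1/((k:ℝ)+1)) := by
            ext x
            simp only [Metric.mem_closedBall, Metric.mem_ball, mem_iInter, dist_zero_right]
            constructor
            · intro h k
              have : (0:ℝ) < 1/((k:ℝ)+1) := by positivity
              linarith
            · intro h
              by_contra hc
              push_neg at hc
              obtain ⟨k, hk⟩ := exists_nat_one_div_lt (sub_pos.2 hc)
              have := h k
              linarith
          have hanti : Antitone fun k : ℕ =>
              Metric.ball (0 : EuclideanSpace ℝ (Fin n)) (R + 1/((k:ℝ)+1)) := by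
            intro k k' hkk'
            refine Metric.ball_subset_ball ?_
            have h1 : 1/((k':ℝ)+1) ≤ 1/((k:ℝ)+1) := by
              apply one_div_le_one_div_of_le (by positivity)
              have : (k:ℝ) ≤ (k':ℝ) := by exact_mod_cast hkk'
              linarith
            linarith
          have hfinw : M (Metric.ball (0 : EuclideanSpace ℝ (Fin n)) (R + 1/(((0:ℕ):ℝ)+1))) ≠ ⊤ := by
            rw [← muG_eq measurableSet_ball]
            exact muG_ball_fin hg _
          have htend := tendsto_measure_iInter_atTop (μ := M)
            (fun k => measurableSet_ball.nullMeasurableSet) hanti ⟨0, hfinw⟩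
          rw [← hin] at htend
          refine ge_of_tendsto htend (Filter.Eventually.of_forall fun k => ?_)
          simp only [Function.comp_apply]
          rw [← muG_eq measurableSet_ball]
          refine hout _ ?_
          have : (0:ℝ) < 1/((k:ℝ)+1) := by positivity
          linarith
        have hsphere : M (Metric.sphere (0 : EuclideanSpace ℝ (Fin n)) R) = 0 :=
          withDensity_absolutelyContinuous volume _ (Measure.addHaar_sphere volume 0 R)
        have hMeq : M (Metric.ball (0 : EuclideanSpace ℝ (Fin n)) R) = distG n g u t := by
          refine le_antisymm hMball (hMcball.trans ?_)
          calc M (Metric.closedBall (0 : EuclideanSpace ℝ (Fin n)) R)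
              ≤ M (Metric.ball (0 : EuclideanSpace ℝ (Fin n)) R ∪
                  Metric.sphere (0 : EuclideanSpace ℝ (Fin n)) R) := by
                refine measure_mono fun x hx => ?_
                rcases lt_or_eq_of_le (Metric.mem_closedBall.1 hx) with h | h
                · exact Or.inl (Metric.mem_ball.2 h)
                · exact Or.inr (Metric.mem_sphere.2 h)
            _ ≤ M (Metric.ball (0 : EuclideanSpace ℝ (Fin n)) R) +
                M (Metric.sphere (0 : EuclideanSpace ℝ (Fin n)) R) := measure_union_le _ _
            _ = M (Metric.ball (0 : EuclideanSpace ℝ (Fin n)) R) := by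
                rw [hsphere, add_zero]
        have haeq : {x : EuclideanSpace ℝ (Fin n) | t < |rearrG n g u x|} =ᵐ[volume]
            Metric.ball (0 : EuclideanSpace ℝ (Fin n)) R := by
          rw [ae_eq_set]
          constructor
          · refine measure_mono_null (fun x hx => ?_)
              (Measure.addHaar_sphere volume 0 R)
            have h1 := hdir2' x hx.1
            have h2 : ‖x‖ ≤ R := le_csSup hbddT ⟨norm_nonneg x, h1⟩
            have h3 : ¬ ‖x‖ < R := fun h =>
              hx.2 (Metric.mem_ball.2 (by rwa [dist_zero_right]))
            have h4 : ‖x‖ = R := le_antisymm h2 (not_lt.1 h3)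
            exact Metric.mem_sphere.2 (by rwa [dist_zero_right])
          · refine measure_mono_null (fun x hx => ?_) volume_singleton_zero
            by_contra hx0
            simp only [mem_singleton_iff] at hx0
            have hxb : ‖x‖ < R := by
              have := hx.1
              rwa [Metric.mem_ball, dist_zero_right] at this
            exact hx.2 (hdir1' x hx0 (hball_lt ‖x‖ hxb))
        calc distG n g u t = M (Metric.ball (0 : EuclideanSpace ℝ (Fin n)) R) := hMeq.symm
          _ = muG n g (Metric.ball (0 : EuclideanSpace ℝ (Fin n)) R) :=
              (muG_eq measurableSet_ball).symm
          _ = muG n g {x : EuclideanSpace ℝ (Fin n) | t < |rearrG n g u x|} := by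
              simp only [muG]
              rw [Measure.restrict_congr_set haeq]
          _ = distG n g (rearrG n g u) t := rfl
      · -- unbounded case
        have hsub : ∀ x : EuclideanSpace ℝ (Fin n), x ≠ 0 →
            x ∈ {x : EuclideanSpace ℝ (Fin n) | t < |rearrG n g u x|} := by
          intro x hx0
          obtain ⟨r, hrT, hr⟩ := not_bddAbove_iff.1 hbddT ‖x‖
          exact hdir1' x hx0 (lt_of_le_of_lt (hm'mono hr.le) hrT.2)
        have haeq : {x : EuclideanSpace ℝ (Fin n) | t < |rearrG n g u x|} =ᵐ[volume]
            (univ : Set (EuclideanSpace ℝ (Fin n))) := by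
          rw [ae_eq_set]
          constructor
          · rw [diff_univ, measure_empty]
          · refine measure_mono_null (fun x hx => ?_) volume_singleton_zero
            by_contra hx0
            simp only [mem_singleton_iff] at hx0
            exact hx.2 (hsub x hx0)
        have hMuniv : muG n g (univ : Set (EuclideanSpace ℝ (Fin n))) = distG n g u t := by
          refine le_antisymm ?_ (muG_mono (subset_univ _))
          have hun : (univ : Set (EuclideanSpace ℝ (Fin n))) =
              ⋃ k : ℕ, Metric.ball (0 : EuclideanSpace ℝ (Fin n)) (k:ℝ) := by
            ext x
            simp only [mem_univ, true_iff, mem_iUnion, Metric.mem_ball, dist_zero_right]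
            exact exists_nat_gt ‖x‖
          have hmono : Monotone fun k : ℕ =>
              Metric.ball (0 : EuclideanSpace ℝ (Fin n)) (k:ℝ) := fun k k' h =>
            Metric.ball_subset_ball (by exact_mod_cast h)
          rw [muG_eq MeasurableSet.univ, hun, hmono.measure_iUnion]
          refine iSup_le fun k => ?_
          obtain ⟨r, hrT, hr⟩ := not_bddAbove_iff.1 hbddT (k:ℝ)
          rw [← muG_eq measurableSet_ball]
          exact ((hm'mono hr.le).trans_lt hrT.2).le
        calc distG n g u t = muG n g (univ : Set (EuclideanSpace ℝ (Fin n))) := hMuniv.symm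
          _ = muG n g {x : EuclideanSpace ℝ (Fin n) | t < |rearrG n g u x|} := by
              simp only [muG]
              rw [Measure.restrict_congr_set haeq]
          _ = distG n g (rearrG n g u) t := rfl
end
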